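/- arXiv:1306.3910 — 7 statements merged into one kernel-verified Lean document; each statement's English description precedes it below -/
import Mathlib

section
/- Fix a natural number d ≥ 2 and a real r > √(d/(2d+2)). Let X be a subset of the sphere of radius r centered at the origin in Euclidean d-space (i.e., ‖x‖ = r for all x ∈ X) with all pairwise distances at most 1. Then X lies in an open hemisphere: there exists a nonzero vector u ∈ ℝᵈ such that ⟨u, x⟩ > 0 for every x ∈ X. -/
open scoped RealInnerProductSpace

theorem subset_of_sphere_in_open_hemisphere (d : ℕ) (hd : d ≥ 2) (r : ℝ)
    (hr : r > Real.sqrt (d / (2 * d + 2)))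
    (X : Set (EuclideanSpace ℝ (Fin d)))
    (hsphere : ∀ x ∈ X, ‖x‖ = r)
    (hdiam : ∀ x ∈ X, ∀ y ∈ X, ‖x - y‖ ≤ 1) :
    ∃ u : EuclideanSpace ℝ (Fin d), u ≠ 0 ∧ ∀ x ∈ X, ⟪u, x⟫ > 0 := by
  classical
  rcases X.eq_empty_or_nonempty with hX | ⟨x₀, hx₀⟩
  · refine ⟨EuclideanSpace.single ⟨0, by omega⟩ 1, ?_, by simp [hX]⟩
    intro h
    have := congrArg (fun f : EuclideanSpace ℝ (Fin d) => f ⟨0, by omega⟩) h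
    simp [EuclideanSpace.single_apply] at this
  have hr0 : 0 < r := lt_of_le_of_lt (Real.sqrt_nonneg _) hr
  have hrsq : (d : ℝ) / (2 * d + 2) < r ^ 2 := (Real.sqrt_lt' hr0).mp hr
  set c : ℝ := r ^ 2 - (d : ℝ) / (2 * d + 2) with hc
  have hcpos : 0 < c := by rw [hc]; linarith
  have hd1 : (0:ℝ) < (d:ℝ) + 1 := by positivity
  -- key estimate on the convex hull
  have key : ∀ y ∈ convexHull ℝ X, c ≤ ‖y‖ ^ 2 := by
    intro y hy
    obtain ⟨ι, hι, z, w, hzX, haff, hwpos, hw1, hzy⟩ :=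
      eq_pos_convex_span_of_mem_convexHull hy
    have hzmem : ∀ i, z i ∈ X := fun i => hzX ⟨i, rfl⟩
    have hcard : Fintype.card ι ≤ d + 1 := by
      have h6 := haff.card_le_finrank_succ
      have h7 := Submodule.finrank_le (vectorSpan ℝ (Set.range z))
      rw [finrank_euclideanSpace_fin] at h7
      omega
    have hne : Fintype.card ι ≠ 0 := by
      intro h
      have : IsEmpty ι := Fintype.card_eq_zero_iff.mp h
      rw [Finset.univ_eq_empty, Finset.sum_empty] at hw1
      norm_num at hw1
    -- expand the norm squared
    have h1 : ‖y‖ ^ 2 = ∑ i, ∑ j, w i * w j * ⟪z i, z j⟫ := by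
      rw [← real_inner_self_eq_norm_sq, ← hzy, sum_inner]
      refine Finset.sum_congr rfl fun i _ => ?_
      rw [inner_sum]
      refine Finset.sum_congr rfl fun j _ => ?_
      rw [real_inner_smul_left, real_inner_smul_right]
      ring
    have hterm : ∀ i j : ι,
        w i * w j * (r ^ 2 - 1 / 2) + (if i = j then w i ^ 2 * (1 / 2) else 0)
          ≤ w i * w j * ⟪z i, z j⟫ := by
      intro i j
      by_cases hij : i = j
      · subst hij
        have : ⟪z i, z i⟫ = r ^ 2 := by
          rw [real_inner_self_eq_norm_sq, hsphere _ (hzmem i)]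
        rw [this, if_pos rfl]
        have : w i * w i * (r ^ 2 - 1 / 2) + w i ^ 2 * (1 / 2) = w i * w i * r ^ 2 := by ring
        linarith
      · simp only [if_neg hij, add_zero]
        have hip : r ^ 2 - 1 / 2 ≤ ⟪z i, z j⟫ := by
          have hnormsub : ‖z i - z j‖ ^ 2 = ‖z i‖ ^ 2 - 2 * ⟪z i, z j⟫ + ‖z j‖ ^ 2 :=
            norm_sub_sq_real (z i) (z j)
          have h2 : ‖z i - z j‖ ≤ 1 := hdiam _ (hzmem i) _ (hzmem j)
          have h3 : ‖z i - z j‖ ^ 2 ≤ 1 := by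
            nlinarith [norm_nonneg (z i - z j)]
          rw [hsphere _ (hzmem i), hsphere _ (hzmem j)] at hnormsub
          linarith
        have hwij : 0 ≤ w i * w j := le_of_lt (mul_pos (hwpos i) (hwpos j))
        exact mul_le_mul_of_nonneg_left hip hwij
    have hsum : ∑ i, ∑ j, (w i * w j * (r ^ 2 - 1 / 2)
          + (if i = j then w i ^ 2 * (1 / 2) else 0))
        ≤ ∑ i, ∑ j, w i * w j * ⟪z i, z j⟫ :=
      Finset.sum_le_sum fun i _ => Finset.sum_le_sum fun j _ => hterm i j
    have hsplit : ∑ i, ∑ j, (w i * w j * (r ^ 2 - 1 / 2)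
          + (if i = j then w i ^ 2 * (1 / 2) else 0))
        = (r ^ 2 - 1 / 2) + (∑ i, w i ^ 2) * (1 / 2) := by
      simp only [Finset.sum_add_distrib, Finset.sum_ite_eq, Finset.mem_univ, if_pos]
      rw [← Finset.sum_mul]
      congr 1
      have : ∑ i, ∑ j, w i * w j * (r ^ 2 - 1 / 2)
          = (∑ i, w i) * (∑ j, w j) * (r ^ 2 - 1 / 2) := by
        rw [Finset.sum_mul_sum, Finset.sum_mul]
        refine Finset.sum_congr rfl fun i _ => ?_
        rw [Finset.sum_mul]
      rw [this, hw1]; ring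
    -- lower bound on sum of squares
    have hcs : (∑ i, w i) ^ 2 ≤ (Fintype.card ι : ℝ) * ∑ i, w i ^ 2 := by
      simpa using sq_sum_le_card_mul_sum_sq (s := (Finset.univ : Finset ι)) (f := w)
    rw [hw1] at hcs
    have hsq_nonneg : 0 ≤ ∑ i, w i ^ 2 := Finset.sum_nonneg fun i _ => sq_nonneg _
    have hcard' : (Fintype.card ι : ℝ) ≤ (d : ℝ) + 1 := by exact_mod_cast hcard
    have h4 : 1 ≤ ((d : ℝ) + 1) * ∑ i, w i ^ 2 := by
      calc (1:ℝ) = 1 ^ 2 := by norm_num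
        _ ≤ (Fintype.card ι : ℝ) * ∑ i, w i ^ 2 := hcs
        _ ≤ ((d : ℝ) + 1) * ∑ i, w i ^ 2 := by
            exact mul_le_mul_of_nonneg_right hcard' hsq_nonneg
    have h5 : 1 / ((d : ℝ) + 1) ≤ ∑ i, w i ^ 2 := by
      rw [div_le_iff₀ hd1, mul_comm]
      exact h4
    have harith : c ≤ (r ^ 2 - 1 / 2) + (∑ i, w i ^ 2) * (1 / 2) := by
      have : (d : ℝ) / (2 * d + 2) = 1 / 2 - (1 / ((d : ℝ) + 1)) * (1 / 2) := by
        field_simp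
        ring_nf
      rw [hc, this]
      nlinarith
    calc c ≤ (r ^ 2 - 1 / 2) + (∑ i, w i ^ 2) * (1 / 2) := harith
      _ = ∑ i, ∑ j, (w i * w j * (r ^ 2 - 1 / 2)
          + (if i = j then w i ^ 2 * (1 / 2) else 0)) := hsplit.symm
      _ ≤ ∑ i, ∑ j, w i * w j * ⟪z i, z j⟫ := hsum
      _ = ‖y‖ ^ 2 := h1.symm
  -- 0 is not in the closure of the convex hull
  set K := closure (convexHull ℝ X) with hK
  have hKconv : Convex ℝ K := (convex_convexHull ℝ X).closure
  have hKclosed : IsClosed K := isClosed_closure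
  have hKsub : K ⊆ {y : EuclideanSpace ℝ (Fin d) | c ≤ ‖y‖ ^ 2} := by
    apply closure_minimal key
    have : Continuous fun y : EuclideanSpace ℝ (Fin d) => ‖y‖ ^ 2 := by continuity
    exact isClosed_le continuous_const this
  have h0K : (0 : EuclideanSpace ℝ (Fin d)) ∉ K := by
    intro h
    have := hKsub h
    simp only [Set.mem_setOf_eq, norm_zero] at this
    nlinarith
  obtain ⟨f, u, hfu, hub⟩ := geometric_hahn_banach_point_closed hKconv hKclosed h0K
  have hf0 : f 0 = 0 := map_zero f
  have hupos : 0 < u := by rw [hf0] at hfu; exact hfu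
  have hXK : X ⊆ K := (subset_convexHull ℝ X).trans subset_closure
  set v := (InnerProductSpace.toDual ℝ (EuclideanSpace ℝ (Fin d))).symm f with hv
  have hvinner : ∀ x, ⟪v, x⟫ = f x := fun x =>
    InnerProductSpace.toDual_symm_apply
  refine ⟨v, ?_, fun x hx => ?_⟩
  · intro h
    have h1 : ⟪v, x₀⟫ = f x₀ := hvinner x₀
    have h2 : u < f x₀ := hub x₀ (hXK hx₀)
    rw [h] at h1
    simp at h1
    rw [← h1] at h2
    linarith
  · rw [hvinner]
    exact lt_trans hupos (hub x (hXK hx))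
end

section
/- Fix a natural number d ≥ 2 and reals a > 0, b > 0. Let x₁, …, x_k ∈ ℝᵈ be pairwise distinct vectors with ‖xᵢ‖ = a for all i, let λ₁, …, λ_k ≥ 0, and set z = λ₁x₁ + ⋯ + λ_k x_k. Assume ‖z‖ = a and z ≠ xᵢ for every i. Suppose y ∈ ℝᵈ satisfies ‖y − xᵢ‖ ≤ b for each i = 1, …, k and ‖y‖² + a² − b² > 0. Then ‖y − z‖ < b. -/
open RealInnerProductSpace


theorem convex_combination_strictly_closer (d : ℕ) (hd : d ≥ 2) (a b : ℝ)
    (ha : a > 0) (hb : b > 0) (k : ℕ) (x : Fin k → EuclideanSpace ℝ (Fin d))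
    (hinj : Function.Injective x)
    (hnorm : ∀ i, ‖x i‖ = a)
    (lam : Fin k → ℝ) (hlam : ∀ i, 0 ≤ lam i)
    (z : EuclideanSpace ℝ (Fin d)) (hz : z = ∑ i, lam i • x i)
    (hznorm : ‖z‖ = a) (hzx : ∀ i, z ≠ x i)
    (y : EuclideanSpace ℝ (Fin d))
    (hy : ∀ i, ‖y - x i‖ ≤ b)
    (hpos : ‖y‖ ^ 2 + a ^ 2 - b ^ 2 > 0) :
    ‖y - z‖ < b := by
  set c : ℝ := (‖y‖ ^ 2 + a ^ 2 - b ^ 2) / 2 with hc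
  have hcpos : 0 < c := by positivity
  -- inner product of y with each x i is at least c
  have hyx : ∀ i, c ≤ ⟪y, x i⟫ := by
    intro i
    have h1 : ‖y - x i‖ ^ 2 ≤ b ^ 2 := by
      have := hy i
      nlinarith [norm_nonneg (y - x i)]
    have h2 : ‖y - x i‖ ^ 2 = ‖y‖ ^ 2 - 2 * ⟪y, x i⟫ + ‖x i‖ ^ 2 :=
      norm_sub_sq_real y (x i)
    rw [hnorm i] at h2
    rw [hc]; linarith
  -- strict Cauchy-Schwarz: inner z (x i) < a^2
  have hzxi : ∀ i, ⟪z, x i⟫ < a ^ 2 := by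
    intro i
    have hle : ⟪z, x i⟫ ≤ a ^ 2 := by
      have := real_inner_le_norm z (x i)
      rw [hznorm, hnorm i] at this
      nlinarith
    rcases lt_or_eq_of_le hle with h | h
    · exact h
    · exfalso
      have heq : ⟪z, x i⟫ = ‖z‖ * ‖x i‖ := by rw [hznorm, hnorm i]; nlinarith
      rw [inner_eq_norm_mul_iff_real] at heq
      rw [hznorm, hnorm i] at heq
      have : z = x i := by
        have := smul_right_injective (EuclideanSpace ℝ (Fin d)) (ne_of_gt ha) heq
        exact this
      exact hzx i this
  -- some lam i is positive
  have hex : ∃ i, 0 < lam i := by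
    by_contra h
    push_neg at h
    have hall : ∀ i, lam i = 0 := fun i => le_antisymm (h i) (hlam i)
    have : z = 0 := by
      rw [hz]
      simp [hall]
    rw [this] at hznorm
    simp at hznorm
    linarith
  obtain ⟨i₀, hi₀⟩ := hex
  -- sum of lam > 1
  have hS : 1 < ∑ i, lam i := by
    have hz2 : ‖z‖ ^ 2 = ∑ i, lam i * ⟪z, x i⟫ := by
      rw [← real_inner_self_eq_norm_sq]
      nth_rewrite 2 [hz]
      rw [inner_sum]; congr 1; ext i; rw [real_inner_smul_right]
    have hlt : ∑ i, lam i * ⟪z, x i⟫ < ∑ i, lam i * a ^ 2 := by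
      apply Finset.sum_lt_sum
      · intro i _
        exact mul_le_mul_of_nonneg_left (le_of_lt (hzxi i)) (hlam i)
      · exact ⟨i₀, Finset.mem_univ i₀, by
          exact mul_lt_mul_of_pos_left (hzxi i₀) hi₀⟩
    have : a ^ 2 < (∑ i, lam i) * a ^ 2 := by
      calc a ^ 2 = ‖z‖ ^ 2 := by rw [hznorm]
        _ = ∑ i, lam i * ⟪z, x i⟫ := hz2
        _ < ∑ i, lam i * a ^ 2 := hlt
        _ = (∑ i, lam i) * a ^ 2 := by rw [Finset.sum_mul]
    nlinarith
  -- inner y z > c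
  have hyz : c < ⟪y, z⟫ := by
    have h1 : ⟪y, z⟫ = ∑ i, lam i * ⟪y, x i⟫ := by
      rw [hz, inner_sum]; congr 1; ext i; rw [real_inner_smul_right]
    have h2 : (∑ i, lam i) * c ≤ ∑ i, lam i * ⟪y, x i⟫ := by
      rw [Finset.sum_mul]
      apply Finset.sum_le_sum
      intro i _
      exact mul_le_mul_of_nonneg_left (hyx i) (hlam i)
    have : c < (∑ i, lam i) * c := by nlinarith
    linarith [h1 ▸ h2]
  -- conclude
  have hfin : ‖y - z‖ ^ 2 < b ^ 2 := by
    have h2 : ‖y - z‖ ^ 2 = ‖y‖ ^ 2 - 2 * ⟪y, z⟫ + ‖z‖ ^ 2 :=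
      norm_sub_sq_real y z
    rw [hznorm] at h2
    rw [h2, hc] at *
    linarith
  nlinarith [norm_nonneg (y - z)]
end

section
/- Let r > 1/√2 and let X be a finite set of points in Euclidean 4-space, each of norm r, with all pairwise distances at most 1. For v ∈ X let N(v) = {w ∈ X : ‖w − v‖ = 1} and let O_v = (1 − 1/(2r²))·v. Suppose u, v ∈ X with N(v) and N(u) nonempty. Let x ∈ ℝ⁴ satisfy ‖x‖ = r and x − O_v = Σ_{w ∈ N(v)} λ_w (w − O_v) for some nonnegative reals λ_w, and let y ∈ ℝ⁴ satisfy ‖y‖ = r and y − O_u = Σ_{w ∈ N(u)} μ_w (w − O_u) for some nonnegative reals μ_w. Then ‖x − u‖ ≤ 1 and ‖x − y‖ ≤ 1. -/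
attribute [local instance] Classical.propDecidable

open Finset RealInnerProductSpace

private lemma inner_eq_of_norm_sub_eq_one {r : ℝ} {a b : EuclideanSpace ℝ (Fin 4)}
    (ha : ‖a‖ = r) (hb : ‖b‖ = r) (h : ‖a - b‖ = 1) :
    ⟪a, b⟫ = r ^ 2 - 1 / 2 := by
  have h2 : ‖a - b‖ ^ 2 = 1 := by rw [h]; ring
  rw [norm_sub_sq_real, ha, hb] at h2
  nlinarith

private lemma inner_ge_of_norm_sub_le_one {r : ℝ} {a b : EuclideanSpace ℝ (Fin 4)}
    (ha : ‖a‖ = r) (hb : ‖b‖ = r) (h : ‖a - b‖ ≤ 1) :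
    r ^ 2 - 1 / 2 ≤ ⟪a, b⟫ := by
  have h2 : ‖a - b‖ ^ 2 ≤ 1 := by nlinarith [norm_nonneg (a - b)]
  rw [norm_sub_sq_real, ha, hb] at h2
  nlinarith

private lemma norm_sub_le_one_of_inner {r : ℝ} {a b : EuclideanSpace ℝ (Fin 4)}
    (ha : ‖a‖ = r) (hb : ‖b‖ = r) (h : r ^ 2 - 1 / 2 ≤ ⟪a, b⟫) :
    ‖a - b‖ ≤ 1 := by
  have h2 : ‖a - b‖ ^ 2 = r ^ 2 - 2 * ⟪a, b⟫ + r ^ 2 := by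
    rw [norm_sub_sq_real, ha, hb]
  nlinarith [norm_nonneg (a - b)]

set_option maxHeartbeats 1000000 in
private lemma key_hull_lemma {r : ℝ} (hr0 : 0 < r) (hr2 : 1 / 2 < r ^ 2)
    (S : Finset (EuclideanSpace ℝ (Fin 4))) (v : EuclideanSpace ℝ (Fin 4)) (hvr : ‖v‖ = r)
    (hSn : ∀ w ∈ S, ‖w‖ = r) (hSi : ∀ w ∈ S, ⟪w, v⟫ = r ^ 2 - 1 / 2)
    (x : EuclideanSpace ℝ (Fin 4)) (hx : ‖x‖ = r)
    (lam : EuclideanSpace ℝ (Fin 4) → ℝ) (hlam : ∀ w, 0 ≤ lam w)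
    (hxhull : x - (1 - 1 / (2 * r ^ 2)) • v =
      ∑ w ∈ S, lam w • (w - (1 - 1 / (2 * r ^ 2)) • v))
    (z : EuclideanSpace ℝ (Fin 4)) (hz : ‖z‖ = r)
    (hzw : ∀ w ∈ S, r ^ 2 - 1 / 2 ≤ ⟪z, w⟫) :
    r ^ 2 - 1 / 2 ≤ ⟪z, x⟫ := by
  set c : ℝ := 1 - 1 / (2 * r ^ 2) with hc_def
  have hr2ne : r ^ 2 ≠ 0 := by positivity
  have hcr : c * r ^ 2 = r ^ 2 - 1 / 2 := by
    field_simp [hc_def]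
    rw [hc_def]; field_simp
  have hc0 : 0 < c := by
    rw [hc_def]
    have : 1 / (2 * r ^ 2) < 1 := by
      rw [div_lt_one (by positivity)]; linarith
    linarith
  have hc1 : c < 1 := by
    rw [hc_def]
    have : 0 < 1 / (2 * r ^ 2) := by positivity
    linarith
  have hvv : ⟪v, v⟫ = r ^ 2 := by
    rw [real_inner_self_eq_norm_sq, hvr]
  -- inner of each generator with v is zero
  have hgen : ∀ w ∈ S, ⟪w - c • v, v⟫ = 0 := by
    intro w hw
    rw [inner_sub_left, real_inner_smul_left, hvv, hSi w hw, hcr]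
    ring
  -- hence ⟪x - c•v, v⟫ = 0
  have hxv0 : ⟪x - c • v, v⟫ = 0 := by
    rw [hxhull, sum_inner]
    apply Finset.sum_eq_zero
    intro w hw
    rw [real_inner_smul_left, hgen w hw, mul_zero]
  have hxv : ⟪x, v⟫ = c * r ^ 2 := by
    rw [inner_sub_left, real_inner_smul_left, hvv] at hxv0
    linarith
  -- squared norms of x - c•v and w - c•v
  have hnormsq : ∀ a : EuclideanSpace ℝ (Fin 4), ‖a‖ = r → ⟪a, v⟫ = c * r ^ 2 →
      ‖a - c • v‖ ^ 2 = r ^ 2 - c ^ 2 * r ^ 2 := by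
    intro a hna hav
    rw [norm_sub_sq_real, real_inner_smul_right, hav, norm_smul, hvr, hna]
    have : |c| = c := abs_of_pos hc0
    rw [Real.norm_eq_abs, this]
    ring
  have hρsq : 0 < r ^ 2 - c ^ 2 * r ^ 2 := by
    have hcsq : c ^ 2 < 1 := by nlinarith
    nlinarith [mul_pos (show (0:ℝ) < r ^ 2 by positivity) (show (0:ℝ) < 1 - c ^ 2 by linarith)]
  set ρ : ℝ := Real.sqrt (r ^ 2 - c ^ 2 * r ^ 2) with hρ_def
  have hρpos : 0 < ρ := Real.sqrt_pos.mpr hρsq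
  have hnorm_eq : ∀ a : EuclideanSpace ℝ (Fin 4), ‖a‖ = r → ⟪a, v⟫ = c * r ^ 2 →
      ‖a - c • v‖ = ρ := by
    intro a hna hav
    rw [hρ_def, ← hnormsq a hna hav, Real.sqrt_sq (norm_nonneg _)]
  have hxρ : ‖x - c • v‖ = ρ := hnorm_eq x hx hxv
  have hwρ : ∀ w ∈ S, ‖w - c • v‖ = ρ := by
    intro w hw
    refine hnorm_eq w (hSn w hw) ?_
    rw [hSi w hw, hcr]
  -- sum of lam is at least 1
  have hsum_ge : ρ ≤ (∑ w ∈ S, lam w) * ρ := by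
    calc ρ = ‖x - c • v‖ := hxρ.symm
    _ = ‖∑ w ∈ S, lam w • (w - c • v)‖ := by rw [hxhull]
    _ ≤ ∑ w ∈ S, ‖lam w • (w - c • v)‖ := norm_sum_le _ _
    _ = ∑ w ∈ S, lam w * ρ := by
        apply Finset.sum_congr rfl
        intro w hw
        rw [norm_smul, Real.norm_eq_abs, abs_of_nonneg (hlam w), hwρ w hw]
    _ = (∑ w ∈ S, lam w) * ρ := by rw [Finset.sum_mul]
  have hs1 : 1 ≤ ∑ w ∈ S, lam w := by nlinarith
  -- the inner product estimate
  have hzv_le : ⟪z, v⟫ ≤ r ^ 2 := by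
    have := real_inner_le_norm z v
    rw [hz, hvr] at this
    nlinarith
  have hbracket : 0 ≤ r ^ 2 - 1 / 2 - c * ⟪z, v⟫ := by nlinarith
  have hzx : ⟪z, x - c • v⟫ = ∑ w ∈ S, lam w * (⟪z, w⟫ - c * ⟪z, v⟫) := by
    rw [hxhull, inner_sum]
    apply Finset.sum_congr rfl
    intro w hw
    rw [real_inner_smul_right, inner_sub_right, real_inner_smul_right]
  have hsum_lb : (∑ w ∈ S, lam w) * (r ^ 2 - 1 / 2 - c * ⟪z, v⟫) ≤
      ∑ w ∈ S, lam w * (⟪z, w⟫ - c * ⟪z, v⟫) := by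
    rw [Finset.sum_mul]
    apply Finset.sum_le_sum
    intro w hw
    have := hzw w hw
    have := hlam w
    nlinarith
  have hfinal : ⟪z, x⟫ = ⟪z, x - c • v⟫ + c * ⟪z, v⟫ := by
    rw [inner_sub_right, real_inner_smul_right]; ring
  have h1 : r ^ 2 - 1 / 2 - c * ⟪z, v⟫ ≤
      (∑ w ∈ S, lam w) * (r ^ 2 - 1 / 2 - c * ⟪z, v⟫) :=
    le_mul_of_one_le_left hbracket hs1
  rw [hfinal, hzx]
  linarith

theorem spherical_hulls_of_neighborhoods_close (r : ℝ) (hr : r > 1 / Real.sqrt 2)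
    (X : Finset (EuclideanSpace ℝ (Fin 4)))
    (hsphere : ∀ x ∈ X, ‖x‖ = r)
    (hdiam : ∀ x ∈ X, ∀ y ∈ X, ‖x - y‖ ≤ 1)
    (u v : EuclideanSpace ℝ (Fin 4)) (hu : u ∈ X) (hv : v ∈ X)
    (hNv : (X.filter (fun w => ‖w - v‖ = 1)).Nonempty)
    (hNu : (X.filter (fun w => ‖w - u‖ = 1)).Nonempty)
    (x y : EuclideanSpace ℝ (Fin 4)) (hx : ‖x‖ = r) (hy : ‖y‖ = r)
    (lam : EuclideanSpace ℝ (Fin 4) → ℝ) (hlam : ∀ w, 0 ≤ lam w)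
    (hxhull : x - (1 - 1 / (2 * r ^ 2)) • v =
      ∑ w ∈ X.filter (fun w => ‖w - v‖ = 1), lam w • (w - (1 - 1 / (2 * r ^ 2)) • v))
    (mu : EuclideanSpace ℝ (Fin 4) → ℝ) (hmu : ∀ w, 0 ≤ mu w)
    (hyhull : y - (1 - 1 / (2 * r ^ 2)) • u =
      ∑ w ∈ X.filter (fun w => ‖w - u‖ = 1), mu w • (w - (1 - 1 / (2 * r ^ 2)) • u)) :
    ‖x - u‖ ≤ 1 ∧ ‖x - y‖ ≤ 1 := by
  have hsqrt2 : (0:ℝ) < Real.sqrt 2 := Real.sqrt_pos.mpr (by norm_num)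
  have hr0 : 0 < r := lt_trans (by positivity) hr
  have hr2 : 1 / 2 < r ^ 2 := by
    have h1 : (1 / Real.sqrt 2) ^ 2 = 1 / 2 := by
      rw [div_pow, one_pow, Real.sq_sqrt (by norm_num : (2:ℝ) ≥ 0)]
    have h2 : (1 / Real.sqrt 2) * (1 / Real.sqrt 2) < r * r :=
      mul_self_lt_mul_self (by positivity) hr
    nlinarith
  -- properties of the filtered sets
  have hSvn : ∀ w ∈ X.filter (fun w => ‖w - v‖ = 1), ‖w‖ = r := by
    intro w hw; exact hsphere w (Finset.mem_filter.mp hw).1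
  have hSvi : ∀ w ∈ X.filter (fun w => ‖w - v‖ = 1), ⟪w, v⟫ = r ^ 2 - 1 / 2 := by
    intro w hw
    have h := Finset.mem_filter.mp hw
    exact inner_eq_of_norm_sub_eq_one (hsphere w h.1) (hsphere v hv) h.2
  have hSun : ∀ w ∈ X.filter (fun w => ‖w - u‖ = 1), ‖w‖ = r := by
    intro w hw; exact hsphere w (Finset.mem_filter.mp hw).1
  have hSui : ∀ w ∈ X.filter (fun w => ‖w - u‖ = 1), ⟪w, u⟫ = r ^ 2 - 1 / 2 := by
    intro w hw
    have h := Finset.mem_filter.mp hw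
    exact inner_eq_of_norm_sub_eq_one (hsphere w h.1) (hsphere u hu) h.2
  -- any z ∈ X has ⟪z, x⟫ ≥ r² - 1/2
  have hxX : ∀ z ∈ X, r ^ 2 - 1 / 2 ≤ ⟪z, x⟫ := by
    intro z hz
    refine key_hull_lemma hr0 hr2 _ v (hsphere v hv) hSvn hSvi x hx lam hlam hxhull z
      (hsphere z hz) ?_
    intro w hw
    exact inner_ge_of_norm_sub_le_one (hsphere z hz)
      (hSvn w hw) (hdiam z hz w (Finset.mem_filter.mp hw).1)
  have hxu : r ^ 2 - 1 / 2 ≤ ⟪u, x⟫ := hxX u hu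
  have hxy : r ^ 2 - 1 / 2 ≤ ⟪x, y⟫ := by
    refine key_hull_lemma hr0 hr2 _ u (hsphere u hu) hSun hSui y hy mu hmu hyhull x hx ?_
    intro w hw
    rw [real_inner_comm]
    exact hxX w (Finset.mem_filter.mp hw).1
  constructor
  · rw [show x - u = -(u - x) by abel, norm_neg]
    exact norm_sub_le_one_of_inner (hsphere u hu) hx hxu
  · exact norm_sub_le_one_of_inner hx hy hxy
end

section
/- Let G be a (simple) graph on n ≥ 52 vertices with e edges, where e ≥ n²/4. Then G contains a complete bipartite subgraph K_{7,3}: there exist disjoint vertex sets A and B with |A| = 7, |B| = 3, and every vertex of A adjacent to every vertex of B. -/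
open Finset

lemma choose3_identity (d : ℕ) : 6 * d.choose 3 + (d - 1) = (d - 1) ^ 3 := by
  match d with
  | 0 => decide
  | 1 => decide
  | (k + 2) =>
    have h : 6 * (k + 2).choose 3 = (k + 2).descFactorial 3 := by
      rw [Nat.descFactorial_eq_factorial_mul_choose]; norm_num [Nat.factorial]
    simp only [h, Nat.descFactorial, Nat.add_sub_cancel, Nat.sub_zero]
    have h1 : k + 2 - 1 = k + 1 := by omega
    rw [h1]
    ring

theorem contains_K73_of_many_edges {V : Type*} [Fintype V] [DecidableEq V]
    (G : SimpleGraph V) [DecidableRel G.Adj]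
    (n : ℕ) (hn : Fintype.card V = n) (hn52 : n ≥ 52)
    (he : (G.edgeFinset.card : ℝ) ≥ (n : ℝ) ^ 2 / 4) :
    ∃ A B : Finset V, Disjoint A B ∧ A.card = 7 ∧ B.card = 3 ∧
      ∀ a ∈ A, ∀ b ∈ B, G.Adj a b := by
  by_contra hcon
  push_neg at hcon
  classical
  set P3 := (univ : Finset V).powersetCard 3 with hP3
  -- each 3-set has at most 6 common neighbors
  have hB6 : ∀ B ∈ P3, ((univ : Finset V).filter (fun v => B ⊆ G.neighborFinset v)).card ≤ 6 := by
    intro B hB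
    rw [Finset.mem_powersetCard] at hB
    by_contra h
    push_neg at h
    obtain ⟨A, hA7, hAcard⟩ := Finset.exists_subset_card_eq (show 7 ≤ _ from h)
    have hAmem : ∀ a ∈ A, B ⊆ G.neighborFinset a := fun a ha => (Finset.mem_filter.mp (hA7 ha)).2
    have hdisj : Disjoint A B := by
      rw [Finset.disjoint_left]
      intro a ha hab
      exact G.irrefl ((G.mem_neighborFinset a a).mp (hAmem a ha hab))
    obtain ⟨a, ha, b, hb, hnadj⟩ := hcon A B hdisj hAcard hB.2
    exact hnadj ((G.mem_neighborFinset a b).mp (hAmem a ha hb))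
  -- double counting
  have hdc : ∑ v : V, (G.degree v).choose 3
      = ∑ B ∈ P3, ((univ : Finset V).filter (fun v => B ⊆ G.neighborFinset v)).card := by
    have h1 : ∀ v : V, (G.degree v).choose 3
        = (P3.filter (fun B => B ⊆ G.neighborFinset v)).card := by
      intro v
      rw [show G.degree v = (G.neighborFinset v).card from rfl, ← Finset.card_powersetCard]
      congr 1
      ext B
      simp only [Finset.mem_powersetCard, Finset.mem_filter, hP3, Finset.subset_univ, true_and]
      tauto
    simp only [h1, Finset.card_filter]
    exact Finset.sum_comm
  have hupper : ∑ v : V, (G.degree v).choose 3 ≤ 6 * n.choose 3 := by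
    rw [hdc]
    calc ∑ B ∈ P3, ((univ : Finset V).filter (fun v => B ⊆ G.neighborFinset v)).card
        ≤ ∑ _B ∈ P3, 6 := Finset.sum_le_sum hB6
      _ = P3.card * 6 := by rw [Finset.sum_const, smul_eq_mul]
      _ = 6 * n.choose 3 := by
          rw [hP3, Finset.card_powersetCard, Finset.card_univ, hn]; ring
  -- real-number setup
  have hm52 : (n : ℝ) ≥ 52 := by exact_mod_cast hn52
  have hm0 : (0 : ℝ) < (n : ℝ) := by linarith
  set y : V → ℝ := fun v => ((G.degree v - 1 : ℕ) : ℝ) with hy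
  have hy0 : ∀ v ∈ (univ : Finset V), 0 ≤ y v := fun v _ => Nat.cast_nonneg _
  have hid : ∀ v : V, 6 * ((G.degree v).choose 3 : ℝ) = y v ^ 3 - y v := by
    intro v
    have h := choose3_identity (G.degree v)
    have h2 : 6 * ((G.degree v).choose 3 : ℝ) + ((G.degree v - 1 : ℕ) : ℝ)
        = ((G.degree v - 1 : ℕ) : ℝ) ^ 3 := by exact_mod_cast h
    show 6 * ((G.degree v).choose 3 : ℝ)
      = ((G.degree v - 1 : ℕ) : ℝ) ^ 3 - ((G.degree v - 1 : ℕ) : ℝ)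
    linarith
  -- degree bounds
  have hdegle : ∀ v : V, (G.degree v : ℝ) ≤ (n : ℝ) := by
    intro v
    have h : G.degree v ≤ n := by
      rw [← hn]
      exact (Finset.card_le_univ (G.neighborFinset v)).trans_eq Finset.card_univ
    exact_mod_cast h
  have hyle : ∀ v : V, y v ≤ (n : ℝ) := by
    intro v
    refine le_trans ?_ (hdegle v)
    show ((G.degree v - 1 : ℕ) : ℝ) ≤ (G.degree v : ℝ)
    exact_mod_cast Nat.sub_le (G.degree v) 1
  have hyge : ∀ v : V, (G.degree v : ℝ) - 1 ≤ y v := by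
    intro v
    show (G.degree v : ℝ) - 1 ≤ ((G.degree v - 1 : ℕ) : ℝ)
    rcases Nat.eq_zero_or_pos (G.degree v) with h | h
    · simp [h]
    · rw [Nat.cast_sub h]; simp
  -- sum of degrees
  have hhs : ∑ v : V, (G.degree v : ℝ) = 2 * (G.edgeFinset.card : ℝ) := by
    exact_mod_cast congrArg (fun k : ℕ => (k : ℝ)) G.sum_degrees_eq_twice_card_edges
  have hSge : ∑ v : V, y v ≥ (n : ℝ) ^ 2 / 2 - n := by
    have h1 : ∑ v : V, ((G.degree v : ℝ) - 1) ≤ ∑ v : V, y v :=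
      Finset.sum_le_sum fun v _ => hyge v
    have h2 : ∑ v : V, ((G.degree v : ℝ) - 1) = 2 * (G.edgeFinset.card : ℝ) - n := by
      rw [Finset.sum_sub_distrib, hhs, Finset.sum_const, Finset.card_univ, hn]
      simp
    rw [h2] at h1
    linarith
  have hSle : ∑ v : V, y v ≤ (n : ℝ) ^ 2 := by
    calc ∑ v : V, y v ≤ ∑ _v : V, (n : ℝ) := Finset.sum_le_sum fun v _ => hyle v
      _ = (n : ℝ) * n := by rw [Finset.sum_const, Finset.card_univ, hn]; simp [mul_comm]
      _ = (n : ℝ) ^ 2 := by ring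
  have hS0 : (0 : ℝ) ≤ ∑ v : V, y v := Finset.sum_nonneg hy0
  -- power mean
  have hpow : (∑ v : V, y v) ^ 3 / (n : ℝ) ^ 2 ≤ ∑ v : V, y v ^ 3 := by
    have h := pow_sum_div_card_le_sum_pow (s := (univ : Finset V)) (f := y) hy0 2
    rwa [Finset.card_univ, hn] at h
  -- lower bound on 6 * sum of choose 3
  have hLB : (n : ℝ) * ((n : ℝ) - 2) ^ 3 / 8 - (n : ℝ) ^ 2
      ≤ 6 * ∑ v : V, ((G.degree v).choose 3 : ℝ) := by
    have hs0 : (0 : ℝ) ≤ (n : ℝ) ^ 2 / 2 - n := by nlinarith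
    have h1 : ((n : ℝ) ^ 2 / 2 - n) ^ 3 ≤ (∑ v : V, y v) ^ 3 :=
      pow_le_pow_left₀ hs0 hSge 3
    have h2 : ((n : ℝ) ^ 2 / 2 - n) ^ 3 / (n : ℝ) ^ 2 = (n : ℝ) * ((n : ℝ) - 2) ^ 3 / 8 := by
      rw [div_eq_div_iff (by positivity) (by norm_num : (8:ℝ) ≠ 0)]
      ring
    have h3 : ((n : ℝ) ^ 2 / 2 - n) ^ 3 / (n : ℝ) ^ 2 ≤ (∑ v : V, y v) ^ 3 / (n : ℝ) ^ 2 := by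
      gcongr
    have h4 : 6 * ∑ v : V, ((G.degree v).choose 3 : ℝ)
        = (∑ v : V, y v ^ 3) - ∑ v : V, y v := by
      rw [Finset.mul_sum]
      rw [← Finset.sum_sub_distrib]
      exact Finset.sum_congr rfl fun v _ => hid v
    rw [h4, ← h2]
    have := hpow
    linarith
  -- upper bound as reals
  have hUB : 6 * ∑ v : V, ((G.degree v).choose 3 : ℝ)
      ≤ 6 * ((n : ℝ) * ((n : ℝ) - 1) * ((n : ℝ) - 2)) := by
    have h1 : (∑ v : V, ((G.degree v).choose 3 : ℝ)) ≤ 6 * (n.choose 3 : ℝ) := by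
      exact_mod_cast hupper
    have h2 : 6 * (n.choose 3 : ℝ) = (n : ℝ) * ((n : ℝ) - 1) * ((n : ℝ) - 2) := by
      have h3 : 6 * n.choose 3 = n.descFactorial 3 := by
        rw [Nat.descFactorial_eq_factorial_mul_choose]; norm_num [Nat.factorial]
      have h4 : n.descFactorial 3 = (n - 2) * ((n - 1) * (n * 1)) := rfl
      have h5 : ((n - 2 : ℕ) : ℝ) = (n : ℝ) - 2 := by
        rw [Nat.cast_sub (by omega)]; norm_num
      have h6 : ((n - 1 : ℕ) : ℝ) = (n : ℝ) - 1 := by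
        rw [Nat.cast_sub (by omega)]; norm_num
      calc 6 * (n.choose 3 : ℝ) = ((6 * n.choose 3 : ℕ) : ℝ) := by push_cast; ring
        _ = (((n - 2) * ((n - 1) * (n * 1)) : ℕ) : ℝ) := by rw [h3, h4]
        _ = (n : ℝ) * ((n : ℝ) - 1) * ((n : ℝ) - 2) := by
            push_cast [h5, h6]; ring
    linarith
  -- final numeric contradiction
  have hfin : 6 * ((n : ℝ) * ((n : ℝ) - 1) * ((n : ℝ) - 2))
      < (n : ℝ) * ((n : ℝ) - 2) ^ 3 / 8 - (n : ℝ) ^ 2 := by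
    have h52 : (0 : ℝ) ≤ (n : ℝ) - 52 := by linarith
    nlinarith [mul_nonneg (mul_nonneg hm0.le h52) (sq_nonneg ((n : ℝ) - 1)),
      mul_nonneg hm0.le h52, sq_nonneg ((n : ℝ) - 1), hm0.le]
  linarith
end

section
/- Let r > 1/√3 and let X be a finite subset of a circle of radius r in the Euclidean plane (i.e., there is a point O ∈ ℝ² with ‖x − O‖ = r for all x ∈ X), with all pairwise distances at most 1. Then there is at most one unordered pair {x, y} ⊆ X with ‖x − y‖ = 1. -/
set_option maxHeartbeats 1000000

attribute [local instance] Classical.propDecidable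

private lemma side (R k a c P al : ℝ)
    (hR : 0 < R) (hk : k < R) (h2k : 0 < 2*k + R)
    (ha : k ≤ a) (ha' : a < R) (hc : k ≤ c)
    (hP2 : P^2 = R*R - k*k) (hal2 : al^2 = R*R - a*a)
    (I3 : R*c = k*a + P*al) : 0 < P*al := by
  rcases lt_trichotomy (P*al) 0 with hneg | hzero | hpos
  · exfalso
    have hka : k*(R-a) ≤ P*al := by nlinarith
    have hkneg : k < 0 := by nlinarith
    have hsq : (P*al)^2 ≤ (k*(R-a))^2 := by nlinarith
    have hexp : (P*al)^2 = (R*R-k*k)*(R*R-a*a) := by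
      rw [mul_pow, hP2, hal2]
    have hRa : (0:ℝ) < R - a := by linarith
    have h4 : ((R-k)*(R+k)*(R+a) - k^2*(R-a)) * (R-a) ≤ 0 := by nlinarith [hsq, hexp]
    have h5 : (R-k)*(R+k)*(R+a) - k^2*(R-a) ≤ 0 := by
      by_contra hcon
      push_neg at hcon
      nlinarith [mul_pos hcon hRa]
    nlinarith [h5,
      mul_nonneg (mul_nonneg (show (0:ℝ) ≤ R-k by linarith) (show (0:ℝ) ≤ R+k by linarith)) (show (0:ℝ) ≤ a-k by linarith),
      mul_nonneg (sq_nonneg k) (show (0:ℝ) ≤ a-k by linarith),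
      mul_pos (mul_pos (show (0:ℝ) < R-k by linarith) hR) (show (0:ℝ) < R+2*k by linarith)]
  · exfalso
    have hP : P ≠ 0 := by
      intro h; rw [h] at hP2; nlinarith
    have hal : al ≠ 0 := by
      intro h; rw [h] at hal2; nlinarith
    exact (mul_ne_zero hP hal) hzero
  · exact hpos

private lemma final (R k a b P al be : ℝ)
    (hR : 0 < R) (hk : k < R) (h2k : 0 < 2*k + R)
    (ha : k ≤ a) (ha' : a < R) (hb : k ≤ b) (hb' : b < R)
    (hP2 : P^2 = R*R - k*k)
    (hal2 : al^2 = R*R - a*a) (hbe2 : be^2 = R*R - b*b)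
    (hPa : 0 < P*al) (hPb : 0 < P*be)
    (hab5 : al*be = R*k - a*b) : False := by
  have hP2pos : (0:ℝ) < R*R - k*k := by nlinarith
  have hab : 0 < al*be := by nlinarith [mul_pos hPa hPb, hP2pos, sq_nonneg P]
  have habk : a*b < R*k := by nlinarith
  have ha0 : 0 ≤ a := by
    by_contra hcon
    push_neg at hcon
    nlinarith [mul_lt_mul_of_neg_left hb' hcon]
  have hb0 : 0 ≤ b := by
    by_contra hcon
    push_neg at hcon
    nlinarith [mul_lt_mul_of_neg_left ha' hcon]
  have hk0 : 0 < k := by nlinarith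
  have e1 : R*k - a*b ≤ k*(R-a) := by nlinarith [mul_nonneg ha0 (show (0:ℝ) ≤ b - k by linarith)]
  have e2 : R*k - a*b ≤ k*(R-b) := by nlinarith [mul_nonneg hb0 (show (0:ℝ) ≤ a - k by linarith)]
  have epos : 0 < R*k - a*b := by linarith
  have hkRa : (0:ℝ) ≤ k*(R-a) := le_trans epos.le e1
  have esq' := mul_le_mul e1 e2 epos.le hkRa
  have esq : (R*k - a*b)^2 ≤ k^2*((R-a)*(R-b)) := by nlinarith [esq']
  have hab2 : (al*be)^2 = (R*R - a*a)*(R*R - b*b) := by rw [mul_pow, hal2, hbe2]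
  have hfin : (R*k - a*b)^2 = (R*R - a*a)*(R*R - b*b) := by rw [← hab5, hab2]
  have hRab : (0:ℝ) < (R-a)*(R-b) :=
    mul_pos (by linarith) (by linarith)
  have h4 : ((R+a)*(R+b) - k^2) * ((R-a)*(R-b)) ≤ 0 := by
    have hid : ((R+a)*(R+b) - k^2) * ((R-a)*(R-b))
        = (R*R-a*a)*(R*R-b*b) - k^2*((R-a)*(R-b)) := by ring
    rw [hid]
    linarith [hfin, esq]
  have h5 : (R+a)*(R+b) - k^2 ≤ 0 := by
    by_contra hcon
    push_neg at hcon
    linarith [mul_pos hcon hRab, h4]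
  clear h4 hfin hab2 esq esq' hab5 hab hal2 hbe2 hP2 hPa hPb habk e1 e2 hkRa hP2pos
  nlinarith [h5, mul_nonneg (show (0:ℝ) ≤ R+a by linarith) (show (0:ℝ) ≤ b-k by linarith),
    mul_nonneg (show (0:ℝ) ≤ R+k by linarith) (show (0:ℝ) ≤ a-k by linarith),
    mul_pos hR (show (0:ℝ) < R+2*k by linarith)]
private lemma key1 (R k p1 p2 q1 q2 v1 v2 : ℝ)
    (hR : 0 < R) (hk : k < R) (h2k : 0 < 2*k + R)
    (hp : p1^2+p2^2 = R) (hq : q1^2+q2^2 = R) (hv : v1^2+v2^2 = R)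
    (hpq : p1*q1+p2*q2 = k) (hpv : p1*v1+p2*v2 = k)
    (hqv : k ≤ q1*v1+q2*v2) :
    q1 = v1 ∧ q2 = v2 := by
  by_cases h : q1 = v1 ∧ q2 = v2
  · exact h
  exfalso
  have h1 : (p1*(q2+v2) - p2*(q1+v1)) * (q1 - v1) = 0 := by
    linear_combination (q2+v2)*hpq - (q2+v2)*hpv - p2*hq + p2*hv
  have h2 : (p1*(q2+v2) - p2*(q1+v1)) * (q2 - v2) = 0 := by
    linear_combination p1*hq - p1*hv - (q1+v1)*hpq + (q1+v1)*hpv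
  have hchi : p1*(q2+v2) - p2*(q1+v1) = 0 := by
    rcases mul_eq_zero.1 h1 with h' | h'
    · exact h'
    rcases mul_eq_zero.1 h2 with h'' | h''
    · exact h''
    exact absurd ⟨by linarith, by linarith⟩ h
  have lag : (p1*(q1+v1)+p2*(q2+v2))^2 + (p1*(q2+v2)-p2*(q1+v1))^2
      = (p1^2+p2^2)*((q1+v1)^2+(q2+v2)^2) := by ring
  have hpz : p1*(q1+v1)+p2*(q2+v2) = 2*k := by linear_combination hpq + hpv
  have hzz : (q1+v1)^2+(q2+v2)^2 = 2*R + 2*(q1*v1+q2*v2) := by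
    linear_combination hq + hv
  have key : 4*k^2 = R*(2*R + 2*(q1*v1+q2*v2)) := by
    rw [← hzz, ← hp, ← lag, hpz, hchi]; ring
  nlinarith [mul_pos h2k (show (0:ℝ) < R - k by linarith),
    mul_le_mul_of_nonneg_left hqv (le_of_lt hR)]

private lemma key2 (R k p1 p2 q1 q2 u1 u2 v1 v2 : ℝ)
    (hR : 0 < R) (hk : k < R) (h2k : 0 < 2*k + R)
    (hp : p1^2+p2^2 = R) (hq : q1^2+q2^2 = R) (hu : u1^2+u2^2 = R) (hv : v1^2+v2^2 = R)
    (hpq : p1*q1+p2*q2 = k) (huv : u1*v1+u2*v2 = k)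
    (hpu : k ≤ p1*u1+p2*u2) (hpv : k ≤ p1*v1+p2*v2)
    (hqu : k ≤ q1*u1+q2*u2) (hqv : k ≤ q1*v1+q2*v2)
    (hpu' : p1*u1+p2*u2 < R) (hpv' : p1*v1+p2*v2 < R) :
    False := by
  have hP2 : (p1*q2 - p2*q1)^2 = R*R - k*k := by
    linear_combination (q1^2+q2^2)*hp + R*hq - (p1*q1+p2*q2+k)*hpq
  have hal2 : (p1*u2 - p2*u1)^2 = R*R - (p1*u1+p2*u2)*(p1*u1+p2*u2) := by
    linear_combination (u1^2+u2^2)*hp + R*hu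
  have hbe2 : (p1*v2 - p2*v1)^2 = R*R - (p1*v1+p2*v2)*(p1*v1+p2*v2) := by
    linear_combination (v1^2+v2^2)*hp + R*hv
  have I3 : R*(q1*u1+q2*u2) = k*(p1*u1+p2*u2) + (p1*q2-p2*q1)*(p1*u2-p2*u1) := by
    linear_combination -(q1*u1+q2*u2)*hp + (p1*u1+p2*u2)*hpq
  have I4 : R*(q1*v1+q2*v2) = k*(p1*v1+p2*v2) + (p1*q2-p2*q1)*(p1*v2-p2*v1) := by
    linear_combination -(q1*v1+q2*v2)*hp + (p1*v1+p2*v2)*hpq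
  have I5 : R*k = (p1*u1+p2*u2)*(p1*v1+p2*v2) + (p1*u2-p2*u1)*(p1*v2-p2*v1) := by
    linear_combination -(u1*v1+u2*v2)*hp - R*huv
  have hPa : 0 < (p1*q2-p2*q1)*(p1*u2-p2*u1) :=
    side R k (p1*u1+p2*u2) (q1*u1+q2*u2) _ _ hR hk h2k hpu hpu' hqu hP2 hal2 I3
  have hPb : 0 < (p1*q2-p2*q1)*(p1*v2-p2*v1) :=
    side R k (p1*v1+p2*v2) (q1*v1+q2*v2) _ _ hR hk h2k hpv hpv' hqv hP2 hbe2 I4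
  have hab5 : (p1*u2-p2*u1)*(p1*v2-p2*v1) = R*k - (p1*u1+p2*u2)*(p1*v1+p2*v2) := by
    linarith [I5]
  exact final R k (p1*u1+p2*u2) (p1*v1+p2*v2) (p1*q2-p2*q1) (p1*u2-p2*u1) (p1*v2-p2*v1)
    hR hk h2k hpu hpu' hpv hpv' hP2 hal2 hbe2 hPa hPb hab5

private lemma normsq2 (x y : EuclideanSpace ℝ (Fin 2)) :
    ‖x - y‖ ^ 2 = (x 0 - y 0)^2 + (x 1 - y 1)^2 := by
  rw [← dist_eq_norm, EuclideanSpace.dist_eq]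
  rw [Real.sq_sqrt (by positivity)]
  simp [Fin.sum_univ_two, Real.dist_eq, sq_abs]

private lemma rsq_facts (r : ℝ) (hr : r > 1 / Real.sqrt 3) : 1/3 < r^2 ∧ 0 < r := by
  have h3 : (0:ℝ) < Real.sqrt 3 := Real.sqrt_pos.mpr (by norm_num)
  have hr0 : 0 < r := lt_trans (by positivity) hr
  have hsq : 1 < r * Real.sqrt 3 := (div_lt_iff₀ h3).mp hr
  refine ⟨?_, hr0⟩
  nlinarith [hsq, Real.sq_sqrt (show (0:ℝ) ≤ 3 by norm_num), Real.sqrt_nonneg 3]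

/-- pivot lemma: two unit chords from one point force the other endpoints equal -/
private lemma SV (r : ℝ) (hr : r > 1 / Real.sqrt 3) (O p q v : EuclideanSpace ℝ (Fin 2))
    (hp : ‖p - O‖ = r) (hq : ‖q - O‖ = r) (hv : ‖v - O‖ = r)
    (hpq : ‖p - q‖ = 1) (hpv : ‖p - v‖ = 1) (hqv : ‖q - v‖ ≤ 1) : q = v := by
  obtain ⟨hR3, hr0⟩ := rsq_facts r hr
  have hp2 : (p 0 - O 0)^2 + (p 1 - O 1)^2 = r^2 := by rw [← normsq2, hp]
  have hq2 : (q 0 - O 0)^2 + (q 1 - O 1)^2 = r^2 := by rw [← normsq2, hq]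
  have hv2 : (v 0 - O 0)^2 + (v 1 - O 1)^2 = r^2 := by rw [← normsq2, hv]
  have hpq2 : (p 0 - q 0)^2 + (p 1 - q 1)^2 = 1 := by rw [← normsq2, hpq]; norm_num
  have hpv2 : (p 0 - v 0)^2 + (p 1 - v 1)^2 = 1 := by rw [← normsq2, hpv]; norm_num
  have hqv2 : (q 0 - v 0)^2 + (q 1 - v 1)^2 ≤ 1 := by
    have h := pow_le_pow_left₀ (norm_nonneg (q - v)) hqv 2
    rw [normsq2] at h; simpa using h
  have hipq : (p 0 - O 0)*(q 0 - O 0) + (p 1 - O 1)*(q 1 - O 1) = r^2 - 1/2 := by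
    linear_combination hp2/2 + hq2/2 - hpq2/2
  have hipv : (p 0 - O 0)*(v 0 - O 0) + (p 1 - O 1)*(v 1 - O 1) = r^2 - 1/2 := by
    linear_combination hp2/2 + hv2/2 - hpv2/2
  have hiqv : r^2 - 1/2 ≤ (q 0 - O 0)*(v 0 - O 0) + (q 1 - O 1)*(v 1 - O 1) := by
    nlinarith [hq2, hv2, hqv2]
  have h := key1 (r^2) (r^2 - 1/2) (p 0 - O 0) (p 1 - O 1) (q 0 - O 0) (q 1 - O 1)
    (v 0 - O 0) (v 1 - O 1) (by positivity) (by linarith) (by linarith)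
    hp2 hq2 hv2 hipq hipv hiqv
  ext i
  fin_cases i
  · show q 0 = v 0
    linarith [h.1]
  · show q 1 = v 1
    linarith [h.2]

private lemma DJ (r : ℝ) (hr : r > 1 / Real.sqrt 3) (O p q u v : EuclideanSpace ℝ (Fin 2))
    (hp : ‖p - O‖ = r) (hq : ‖q - O‖ = r) (hu : ‖u - O‖ = r) (hv : ‖v - O‖ = r)
    (hpq : ‖p - q‖ = 1) (huv : ‖u - v‖ = 1)
    (hpu : ‖p - u‖ ≤ 1) (hpv : ‖p - v‖ ≤ 1) (hqu : ‖q - u‖ ≤ 1) (hqv : ‖q - v‖ ≤ 1) :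
    ({p, q} : Finset (EuclideanSpace ℝ (Fin 2))) = {u, v} := by
  by_cases h1 : p = u
  · subst h1
    have : q = v := SV r hr O p q v hp hq hv hpq huv hqv
    rw [this]
  by_cases h2 : p = v
  · subst h2
    have hpu1 : ‖p - u‖ = 1 := by rw [← huv, norm_sub_rev]
    have : q = u := SV r hr O p q u hp hq hu hpq hpu1 hqu
    rw [this, Finset.pair_comm]
  exfalso
  obtain ⟨hR3, hr0⟩ := rsq_facts r hr
  have hp2 : (p 0 - O 0)^2 + (p 1 - O 1)^2 = r^2 := by rw [← normsq2, hp]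
  have hq2 : (q 0 - O 0)^2 + (q 1 - O 1)^2 = r^2 := by rw [← normsq2, hq]
  have hu2 : (u 0 - O 0)^2 + (u 1 - O 1)^2 = r^2 := by rw [← normsq2, hu]
  have hv2 : (v 0 - O 0)^2 + (v 1 - O 1)^2 = r^2 := by rw [← normsq2, hv]
  have hpq2 : (p 0 - q 0)^2 + (p 1 - q 1)^2 = 1 := by rw [← normsq2, hpq]; norm_num
  have huv2 : (u 0 - v 0)^2 + (u 1 - v 1)^2 = 1 := by rw [← normsq2, huv]; norm_num
  have sqle : ∀ x y : EuclideanSpace ℝ (Fin 2), ‖x - y‖ ≤ 1 →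
      (x 0 - y 0)^2 + (x 1 - y 1)^2 ≤ 1 := by
    intro x y hxy
    have h := pow_le_pow_left₀ (norm_nonneg (x - y)) hxy 2
    rw [normsq2] at h; simpa using h
  have sqpos : ∀ x y : EuclideanSpace ℝ (Fin 2), x ≠ y →
      0 < (x 0 - y 0)^2 + (x 1 - y 1)^2 := by
    intro x y hxy
    rw [← normsq2]
    exact pow_pos (norm_sub_pos_iff.mpr hxy) 2
  have hipq : (p 0 - O 0)*(q 0 - O 0) + (p 1 - O 1)*(q 1 - O 1) = r^2 - 1/2 := by
    linear_combination hp2/2 + hq2/2 - hpq2/2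
  have hiuv : (u 0 - O 0)*(v 0 - O 0) + (u 1 - O 1)*(v 1 - O 1) = r^2 - 1/2 := by
    linear_combination hu2/2 + hv2/2 - huv2/2
  exact key2 (r^2) (r^2 - 1/2) (p 0 - O 0) (p 1 - O 1) (q 0 - O 0) (q 1 - O 1)
    (u 0 - O 0) (u 1 - O 1) (v 0 - O 0) (v 1 - O 1)
    (by positivity) (by linarith) (by linarith)
    hp2 hq2 hu2 hv2 hipq hiuv
    (by nlinarith [hp2, hu2, sqle p u hpu]) (by nlinarith [hp2, hv2, sqle p v hpv])
    (by nlinarith [hq2, hu2, sqle q u hqu]) (by nlinarith [hq2, hv2, sqle q v hqv])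
    (by nlinarith [sqpos p u h1]) (by nlinarith [sqpos p v h2])

/-- The set of unordered pairs of points of `X ⊆ ℝ²` at distance exactly `1`. -/
noncomputable def unitPairs2 (X : Finset (EuclideanSpace ℝ (Fin 2))) :
    Finset (Finset (EuclideanSpace ℝ (Fin 2))) :=
  (X.powersetCard 2).filter (fun s => ∀ x ∈ s, ∀ y ∈ s, x ≠ y → ‖x - y‖ = 1)

theorem at_most_one_diameter_on_large_circle (r : ℝ) (hr : r > 1 / Real.sqrt 3)
    (X : Finset (EuclideanSpace ℝ (Fin 2))) (O : EuclideanSpace ℝ (Fin 2))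
    (hcirc : ∀ x ∈ X, ‖x - O‖ = r)
    (hdiam : ∀ x ∈ X, ∀ y ∈ X, ‖x - y‖ ≤ 1) :
    (unitPairs2 X).card ≤ 1 := by
  apply Finset.card_le_one.mpr
  intro s hs t ht
  obtain ⟨hs1, hs2⟩ := Finset.mem_filter.mp hs
  obtain ⟨hssub, hscard⟩ := Finset.mem_powersetCard.mp hs1
  obtain ⟨ht1, ht2⟩ := Finset.mem_filter.mp ht
  obtain ⟨htsub, htcard⟩ := Finset.mem_powersetCard.mp ht1
  obtain ⟨a, b, hab, rfl⟩ := Finset.card_eq_two.mp hscard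
  obtain ⟨c, d, hcd, rfl⟩ := Finset.card_eq_two.mp htcard
  have haX : a ∈ X := hssub (by simp)
  have hbX : b ∈ X := hssub (by simp)
  have hcX : c ∈ X := htsub (by simp)
  have hdX : d ∈ X := htsub (by simp)
  have hab1 : ‖a - b‖ = 1 := hs2 a (by simp) b (by simp) hab
  have hcd1 : ‖c - d‖ = 1 := ht2 c (by simp) d (by simp) hcd
  exact DJ r hr O a b c d (hcirc a haX) (hcirc b hbX) (hcirc c hcX) (hcirc d hdX)
    hab1 hcd1 (hdiam a haX c hcX) (hdiam a haX d hdX) (hdiam b hbX c hcX) (hdiam b hbX d hdX)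
end

section
/- For all natural numbers n ≥ 5 and a with 2 ≤ a ≤ n − 2, there exists a set X of n points in Euclidean 4-space with all pairwise distances at most 1 such that the number of 3-element subsets of X with all three pairwise distances equal to 1 is at least n + 2(n − a)·⌊(a − 1)/2⌋. (Such X can be taken to be a Lenz configuration: a points on a circle of radius r₁ and n − a points on a concentric circle of radius r₂ lying in an orthogonal plane, with r₁² + r₂² = 1.) -/
attribute [local instance] Classical.propDecidable

/-- The set of 3-element subsets of `X` with all three pairwise distances equal to `1`. -/
noncomputable def unitTriangles (X : Finset (EuclideanSpace ℝ (Fin 4))) :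
    Finset (Finset (EuclideanSpace ℝ (Fin 4))) :=
  (X.powersetCard 3).filter (fun s => ∀ x ∈ s, ∀ y ∈ s, x ≠ y → ‖x - y‖ = 1)

namespace LenzAux
open Real Finset

noncomputable def vec4 (w x y z : ℝ) : EuclideanSpace ℝ (Fin 4) := WithLp.toLp 2 ![w, x, y, z]

lemma normsq (u : EuclideanSpace ℝ (Fin 4)) : ‖u‖ ^ 2 = ∑ i, (u i) ^ 2 := by
  rw [EuclideanSpace.norm_eq, Real.sq_sqrt (by positivity)]
  simp [Real.norm_eq_abs, sq_abs]

lemma normsq_vec4 (w x y z w' x' y' z' : ℝ) :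
    ‖vec4 w x y z - vec4 w' x' y' z'‖ ^ 2
      = (w - w')^2 + (x - x')^2 + (y - y')^2 + (z - z')^2 := by
  rw [normsq]
  have h : ∀ i, (vec4 w x y z - vec4 w' x' y' z') i
      = vec4 w x y z i - vec4 w' x' y' z' i := fun i => rfl
  simp only [h]
  rw [Fin.sum_univ_four]
  simp [vec4]

lemma norm_eq_one_of (u : EuclideanSpace ℝ (Fin 4)) (h : ‖u‖^2 = 1) : ‖u‖ = 1 := by
  nlinarith [norm_nonneg u]

lemma norm_le_one_of (u : EuclideanSpace ℝ (Fin 4)) (h : ‖u‖^2 ≤ 1) : ‖u‖ ≤ 1 := by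
  nlinarith [norm_nonneg u]

lemma chord (r θ φ : ℝ) : (r*cos θ - r*cos φ)^2 + (r*sin θ - r*sin φ)^2
    = 4*r^2* sin ((θ-φ)/2)^2 := by
  have h1 := Real.cos_sub θ φ
  have h2 := Real.sin_sq_eq_half_sub ((θ - φ)/2)
  rw [show 2*((θ-φ)/2) = θ - φ by ring] at h2
  have s1 := Real.sin_sq_add_cos_sq θ
  have s2 := Real.sin_sq_add_cos_sq φ
  nlinarith [sq_nonneg r]

section
variable {b c : ℕ}

lemma key_le (hb : 3 ≤ b) (hbo : b % 2 = 1) (j : ℕ) (hj : j < b) :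
    sin (π*j/b)^2 ≤ cos (π/(2*b))^2 := by
  have hbR : (0:ℝ) < b := by positivity
  have hpi := Real.pi_pos
  have fr : ∀ x y : ℝ, x ≤ y → π*x/(2*b) ≤ π*y/(2*b) := by
    intro x y h
    gcongr
  have frh : π/2 = π*(b:ℝ)/(2*b) := by field_simp
  have frp : π + π/2 = π*(3*(b:ℝ))/(2*b) := by field_simp; ring
  have frn : -(π/2) = π*(-(b:ℝ))/(2*b) := by field_simp
  have h2 : sin (π*j/b)^2 = 1/2 - cos (2*π*j/b)/2 := by
    have := Real.sin_sq_eq_half_sub (π*j/b)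
    rw [show 2*(π*j/b) = 2*π*j/b by ring] at this
    linarith
  have h3 : cos (π/(2*b))^2 = 1/2 + cos (π/b)/2 := by
    have := Real.cos_sq (π/(2*b))
    rw [show 2*(π/(2*b)) = π/b by field_simp] at this
    linarith
  rw [h2, h3]
  have key : 0 ≤ cos (π/b) + cos (2*π*j/b) := by
    have hcc : cos (π/b) + cos (2*π*j/b)
        = 2 * cos (π*(2*j+1)/(2*b)) * cos (π*(1 - 2*(j:ℝ))/(2*b)) := by
      rw [Real.cos_add_cos]
      congr 1
      · congr 1; field_simp; ring
      · congr 1; field_simp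
    rw [hcc]
    rcases Nat.lt_or_ge (2*j) b with hcase | hcase
    · have hjb : (2*(j:ℝ)+1) ≤ b := by exact_mod_cast (show 2*j+1 ≤ b by omega)
      have hj0 : (0:ℝ) ≤ j := Nat.cast_nonneg j
      have c1 : 0 ≤ cos (π*(2*j+1)/(2*b)) := by
        apply Real.cos_nonneg_of_mem_Icc
        constructor
        · rw [frn]; exact fr _ _ (by linarith)
        · rw [frh]; exact fr _ _ (by linarith)
      have c2 : 0 ≤ cos (π*(1 - 2*(j:ℝ))/(2*b)) := by
        apply Real.cos_nonneg_of_mem_Icc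
        constructor
        · rw [frn]; exact fr _ _ (by linarith)
        · rw [frh]; exact fr _ _ (by linarith)
      positivity
    · have hjb : (b:ℝ) + 1 ≤ 2*(j:ℝ) := by exact_mod_cast (show b+1 ≤ 2*j by omega)
      have hjb2 : 2*(j:ℝ) + 1 ≤ 2*(b:ℝ) := by exact_mod_cast (show 2*j+1 ≤ 2*b by omega)
      have c1 : cos (π*(2*j+1)/(2*b)) ≤ 0 := by
        apply Real.cos_nonpos_of_pi_div_two_le_of_le
        · rw [frh]; exact fr _ _ (by linarith)
        · rw [frp]; exact fr _ _ (by linarith)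
      have c2 : cos (π*(1 - 2*(j:ℝ))/(2*b)) ≤ 0 := by
        rw [← Real.cos_neg, show -(π*(1 - 2*(j:ℝ))/(2*b)) = π*(2*(j:ℝ)-1)/(2*b) by ring]
        apply Real.cos_nonpos_of_pi_div_two_le_of_le
        · rw [frh]; exact fr _ _ (by linarith)
        · rw [frp]; exact fr _ _ (by linarith)
      have hm := mul_nonneg (neg_nonneg.mpr c1) (neg_nonneg.mpr c2)
      nlinarith [hm]
  linarith

lemma key_eq (hb : 3 ≤ b) (j : ℕ) (hj : 2*j = b - 1 ∨ 2*j = b + 1) :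
    sin (π*j/b)^2 = cos (π/(2*b))^2 := by
  have hbR : (0:ℝ) < b := by positivity
  rcases hj with hj | hj
  · have hc : 2*(j:ℝ) + 1 = b := by
      exact_mod_cast (show 2*j + 1 = b by omega)
    rw [show π*j/b = π/2 - π/(2*b) by
      field_simp; linear_combination hc]
    rw [Real.sin_pi_div_two_sub]
  · have hc : 2*(j:ℝ) = (b:ℝ) + 1 := by exact_mod_cast hj
    rw [show π*j/b = π/2 + π/(2*b) by
      field_simp; linear_combination hc]
    rw [show π/2 + π/(2*b) = π/(2*b) + π/2 by ring, Real.sin_add_pi_div_two]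

lemma key_pos (j : ℕ) (h1 : 1 ≤ j) (hj : j < b) : 0 < sin (π*j/b) := by
  have hbN : 0 < b := lt_of_le_of_lt (Nat.zero_le j) hj
  have hbR : (0:ℝ) < b := by exact_mod_cast hbN
  have hpi := Real.pi_pos
  have hjR : (0:ℝ) < j := by exact_mod_cast h1
  apply Real.sin_pos_of_pos_of_lt_pi
  · exact div_pos (mul_pos hpi hjR) hbR
  · rw [div_lt_iff₀ hbR]
    have : (j:ℝ) < b := by exact_mod_cast hj
    nlinarith
end

noncomputable def r1 (b : ℕ) : ℝ := 1 / (2 * cos (π / (2*b)))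
noncomputable def r2 (b : ℕ) : ℝ := Real.sqrt (1 - r1 b ^ 2)
noncomputable def sB (b : ℕ) : ℝ := arcsin (1/(2 * r2 b))

section
variable {b c : ℕ} (hb : 3 ≤ b)
include hb

lemma hbR : (0:ℝ) < b := by
  have : (3:ℝ) ≤ b := by exact_mod_cast hb
  linarith

lemma ang_pos : 0 < π/(2*b) := by
  have := hbR hb; have := pi_pos; positivity

lemma ang_lt : π/(2*b) ≤ π/6 := by
  have h := hbR hb
  have := pi_pos
  rw [div_le_div_iff₀ (by positivity) (by norm_num)]
  have : (3:ℝ) ≤ b := by exact_mod_cast hb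
  nlinarith

lemma cos_b_pos : 0 < cos (π/(2*b)) := by
  apply cos_pos_of_mem_Ioo
  constructor
  · have := ang_pos hb; have := pi_pos; linarith
  · have h1 := ang_lt hb; have := pi_pos; linarith

lemma cos_b_sq_ge : 3/4 ≤ cos (π/(2*b))^2 := by
  have h1 : cos (π/6) ≤ cos (π/(2*b)) :=
    cos_le_cos_of_nonneg_of_le_pi (le_of_lt (ang_pos hb)) (by have := pi_pos; linarith) (ang_lt hb)
  have h2 := Real.sq_cos_pi_div_six
  have h0 : 0 ≤ cos (π/6) := by rw [Real.cos_pi_div_six]; positivity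
  nlinarith

lemma r1_pos : 0 < r1 b := by
  have := cos_b_pos hb; rw [r1]; positivity

lemma r1_sq : r1 b ^ 2 = 1 / (4 * cos (π/(2*b))^2) := by
  have := cos_b_pos hb; rw [r1]; field_simp; ring

lemma r1_sq_le : r1 b ^ 2 ≤ 1/3 := by
  rw [r1_sq hb]
  have h1 := cos_b_sq_ge hb
  rw [div_le_div_iff₀ (by nlinarith) (by norm_num)]
  nlinarith

lemma r2_sq : r2 b ^ 2 = 1 - r1 b ^ 2 := by
  rw [r2, Real.sq_sqrt]
  have := r1_sq_le hb; linarith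

lemma r2_sq_ge : 2/3 ≤ r2 b ^ 2 := by
  rw [r2_sq hb]; have := r1_sq_le hb; linarith

lemma r2_pos : 0 < r2 b := by
  have h := r2_sq_ge hb
  have h0 : 0 ≤ r2 b := Real.sqrt_nonneg _
  nlinarith

lemma x0_mem : 0 < 1/(2 * r2 b) ∧ 1/(2 * r2 b) < Real.sqrt 2 / 2 := by
  have h2 := r2_pos hb
  constructor
  · positivity
  · have hs : Real.sqrt 2 > 0 := by positivity
    have hsq : Real.sqrt 2 ^ 2 = 2 := Real.sq_sqrt (by norm_num)
    have h3 := r2_sq_ge hb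
    rw [div_lt_div_iff₀ (by positivity) (by norm_num)]
    nlinarith

lemma sin_sB : sin (sB b) = 1/(2 * r2 b) := by
  have h := x0_mem hb
  have hs : Real.sqrt 2 > 0 := by positivity
  have hsq : Real.sqrt 2 ^ 2 = 2 := Real.sq_sqrt (by norm_num)
  rw [sB, Real.sin_arcsin] <;> nlinarith [h.1, h.2]

lemma sB_pos : 0 < sB b := Real.arcsin_pos.2 (x0_mem hb).1

lemma sB_lt : sB b < π/4 := by
  rw [sB]
  rw [Real.arcsin_lt_iff_lt_sin]
  · rw [Real.sin_pi_div_four]; exact (x0_mem hb).2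
  · constructor
    · have := (x0_mem hb).1; linarith
    · have := (x0_mem hb).2
      have hs : Real.sqrt 2 ≤ 2 := by
        nlinarith [Real.sq_sqrt (show (0:ℝ) ≤ 2 by norm_num), Real.sqrt_nonneg 2]
      linarith
  · constructor <;> [linarith [pi_pos]; linarith [pi_pos]]

lemma r_id : 4 * r1 b ^2 * cos (π/(2*b))^2 = 1 := by
  rw [r1_sq hb]
  have := cos_b_sq_ge hb
  field_simp
  exact div_self (cos_b_pos hb).ne'

lemma r_id2 : 4 * r2 b ^2 * sin (sB b)^2 = 1 := by
  rw [sin_sB hb]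
  have := r2_pos hb
  field_simp
  ring

end

section
variable {b c : ℕ} (hb : 3 ≤ b) (hc : 2 ≤ c)

lemma cm1 (hc : 2 ≤ c) : (0:ℝ) < (c:ℝ) - 1 := by
  have : (2:ℝ) ≤ c := by exact_mod_cast hc
  linarith

include hb hc

lemma qangle_mem {m : ℕ} (hm : m ≤ c - 1) :
    0 ≤ (m:ℝ) * sB b / ((c:ℝ)-1) ∧ (m:ℝ) * sB b / ((c:ℝ)-1) ≤ sB b := by
  have h1 := cm1 (c := c) hc
  have hsp := sB_pos hb
  have hmR : (m:ℝ) ≤ (c:ℝ) - 1 := by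
    have h2 : (m:ℝ) ≤ ((c - 1 : ℕ):ℝ) := by exact_mod_cast hm
    have h3 : ((c-1:ℕ):ℝ) = (c:ℝ) - 1 := by
      have h4 : 1 ≤ c := by omega
      push_cast [Nat.cast_sub h4]; ring
    linarith
  constructor
  · positivity
  · rw [div_le_iff₀ h1]
    nlinarith [Nat.cast_nonneg (α := ℝ) m]

lemma qle {m : ℕ} (hm : m ≤ c - 1) :
    sin ((m:ℝ) * sB b / ((c:ℝ)-1))^2 ≤ sin (sB b)^2 := by
  obtain ⟨h0, h1⟩ := qangle_mem hb hc hm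
  have hpi := pi_pos
  have hlt := sB_lt hb
  have hs : sin ((m:ℝ) * sB b / ((c:ℝ)-1)) ≤ sin (sB b) :=
    sin_le_sin_of_le_of_le_pi_div_two (by linarith) (by linarith) h1
  have hs0 : 0 ≤ sin ((m:ℝ) * sB b / ((c:ℝ)-1)) :=
    sin_nonneg_of_nonneg_of_le_pi h0 (by linarith)
  nlinarith

lemma qpos {m : ℕ} (h1 : 1 ≤ m) (hm : m ≤ c - 1) :
    0 < sin ((m:ℝ) * sB b / ((c:ℝ)-1)) := by
  obtain ⟨h0, h2⟩ := qangle_mem hb hc hm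
  have hpi := pi_pos
  have hlt := sB_lt hb
  apply sin_pos_of_pos_of_lt_pi
  · have hm1 : (1:ℝ) ≤ (m:ℝ) := by exact_mod_cast h1
    have h3 := cm1 (c := c) hc
    have hsp := sB_pos hb
    positivity
  · linarith

lemma cosq_pos {j : ℕ} (hj : j ≤ c - 1) :
    0 < cos (2*(j:ℝ)*sB b/((c:ℝ)-1)) := by
  obtain ⟨h0, h1⟩ := qangle_mem hb hc hj
  have hpi := pi_pos
  have hlt := sB_lt hb
  have he : 2*(j:ℝ)*sB b/((c:ℝ)-1) = 2*((j:ℝ)*sB b/((c:ℝ)-1)) := by ring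
  apply cos_pos_of_mem_Ioo
  constructor
  · rw [he]; linarith
  · rw [he]; linarith

end
end LenzAux

namespace LenzAux
open Real Finset

noncomputable def pP (b k : ℕ) : EuclideanSpace ℝ (Fin 4) :=
  vec4 (r1 b * cos (2*π*k/b)) (r1 b * sin (2*π*k/b)) 0 0

noncomputable def pQ (b c j : ℕ) : EuclideanSpace ℝ (Fin 4) :=
  vec4 0 0 (r2 b * cos (2*(j:ℝ)*sB b/((c:ℝ)-1))) (r2 b * sin (2*(j:ℝ)*sB b/((c:ℝ)-1)))

section
variable {b c : ℕ}

lemma dist_pp (b k l : ℕ) :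
    ‖pP b k - pP b l‖^2 = 4 * r1 b^2 * sin (π*((k:ℝ)-(l:ℝ))/b)^2 := by
  rw [pP, pP, normsq_vec4]
  have h := chord (r1 b) (2*π*k/b) (2*π*l/b)
  rw [show ((2*π*(k:ℝ)/b) - (2*π*(l:ℝ)/b))/2 = π*((k:ℝ)-(l:ℝ))/b by ring] at h
  linear_combination h

lemma dist_pp' (b : ℕ) {k l : ℕ} (h : l ≤ k) :
    ‖pP b k - pP b l‖^2 = 4 * r1 b^2 * sin (π*((k-l:ℕ):ℝ)/b)^2 := by
  rw [dist_pp]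
  congr 3
  push_cast [Nat.cast_sub h]
  ring

lemma dist_qq (b c i j : ℕ) :
    ‖pQ b c i - pQ b c j‖^2
      = 4 * r2 b^2 * sin (((i:ℝ)-(j:ℝ)) * sB b/((c:ℝ)-1))^2 := by
  rw [pQ, pQ, normsq_vec4]
  have h := chord (r2 b) (2*(i:ℝ)*sB b/((c:ℝ)-1)) (2*(j:ℝ)*sB b/((c:ℝ)-1))
  rw [show ((2*(i:ℝ)*sB b/((c:ℝ)-1)) - (2*(j:ℝ)*sB b/((c:ℝ)-1)))/2
      = ((i:ℝ)-(j:ℝ)) * sB b/((c:ℝ)-1) by ring] at h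
  linear_combination h

lemma dist_qq' (b c : ℕ) {i j : ℕ} (h : j ≤ i) :
    ‖pQ b c i - pQ b c j‖^2
      = 4 * r2 b^2 * sin (((i-j:ℕ):ℝ) * sB b/((c:ℝ)-1))^2 := by
  rw [dist_qq]
  congr 3
  push_cast [Nat.cast_sub h]
  ring

lemma dist_pq (hb : 3 ≤ b) (k j : ℕ) : ‖pP b k - pQ b c j‖^2 = 1 := by
  rw [pP, pQ, normsq_vec4]
  have t1 := Real.sin_sq_add_cos_sq (2*π*(k:ℝ)/b)
  have t2 := Real.sin_sq_add_cos_sq (2*(j:ℝ)*sB b/((c:ℝ)-1))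
  have t3 := r2_sq hb
  linear_combination (r1 b^2) * t1 + (r2 b^2) * t2 + t3

lemma unit_pq (hb : 3 ≤ b) (k j : ℕ) : ‖pP b k - pQ b c j‖ = 1 :=
  norm_eq_one_of _ (dist_pq hb k j)

lemma unit_qp (hb : 3 ≤ b) (k j : ℕ) : ‖pQ b c j - pP b k‖ = 1 := by
  rw [norm_sub_rev]; exact unit_pq hb k j

lemma pP_ne (hb : 3 ≤ b) {k l : ℕ} (hk : k < b) (hl : l < b) (hne : k ≠ l) :
    pP b k ≠ pP b l := by
  have main : ∀ k l : ℕ, k < b → l < b → l < k → pP b k ≠ pP b l := by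
    intro k l hk hl hlt heq
    have h0 : ‖pP b k - pP b l‖^2 = 0 := by rw [heq, sub_self]; simp
    rw [dist_pp' b (le_of_lt hlt)] at h0
    have hsp := key_pos (b := b) (k - l) (by omega) (by omega)
    have hr := r1_pos hb
    have := mul_pos (mul_pos (by norm_num : (0:ℝ)<4) (pow_pos hr 2)) (pow_pos hsp 2)
    linarith
  rcases Nat.lt_or_ge l k with h | h
  · exact main k l hk hl h
  · have : l ≠ k := fun e => hne e.symm
    exact fun e => (main l k hl hk (by omega) e.symm)

lemma pQ_ne (hb : 3 ≤ b) (hc : 2 ≤ c) {i j : ℕ} (hi : i < c) (hj : j < c) (hne : i ≠ j) :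
    pQ b c i ≠ pQ b c j := by
  have main : ∀ i j : ℕ, i < c → j < c → j < i → pQ b c i ≠ pQ b c j := by
    intro i j hi hj hlt heq
    have h0 : ‖pQ b c i - pQ b c j‖^2 = 0 := by rw [heq, sub_self]; simp
    rw [dist_qq' b c (le_of_lt hlt)] at h0
    have hsp := qpos hb hc (m := i - j) (by omega) (by omega)
    have hr := r2_pos hb
    have := mul_pos (mul_pos (by norm_num : (0:ℝ)<4) (pow_pos hr 2)) (pow_pos hsp 2)
    linarith
  rcases Nat.lt_or_ge j i with h | h
  · exact main i j hi hj h
  · exact fun e => (main j i hj hi (by omega) e.symm)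

lemma vec4_two (w x y z : ℝ) : (vec4 w x y z) 2 = y := rfl

lemma pP_ne_pQ (hb : 3 ≤ b) (hc : 2 ≤ c) {k j : ℕ} (hj : j < c) :
    pP b k ≠ pQ b c j := by
  intro heq
  have h2 : (pP b k) 2 = (pQ b c j) 2 := by rw [heq]
  rw [pP, pQ, vec4_two, vec4_two] at h2
  have hcq := cosq_pos hb hc (j := j) (by omega)
  have hr := r2_pos hb
  nlinarith

lemma diam_pp (hb : 3 ≤ b) (hbo : b % 2 = 1) {k l : ℕ} (hk : k < b) (hl : l < b) :
    ‖pP b k - pP b l‖ ≤ 1 := by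
  have main : ∀ k l : ℕ, k < b → l < b → l ≤ k → ‖pP b k - pP b l‖ ≤ 1 := by
    intro k l hk hl hle
    apply norm_le_one_of
    rw [dist_pp' b hle]
    have h1 := key_le hb hbo (k - l) (by omega)
    have h2 := r_id hb
    have hr := r1_pos hb
    nlinarith
  rcases Nat.lt_or_ge k l with h | h
  · rw [norm_sub_rev]; exact main l k hl hk (le_of_lt h)
  · exact main k l hk hl h

lemma diam_qq (hb : 3 ≤ b) (hc : 2 ≤ c) {i j : ℕ} (hi : i < c) (hj : j < c) :
    ‖pQ b c i - pQ b c j‖ ≤ 1 := by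
  have main : ∀ i j : ℕ, i < c → j < c → j ≤ i → ‖pQ b c i - pQ b c j‖ ≤ 1 := by
    intro i j hi hj hle
    apply norm_le_one_of
    rw [dist_qq' b c hle]
    have h1 := qle hb hc (m := i - j) (by omega)
    have h2 := r_id2 hb
    have hr := r2_pos hb
    nlinarith
  rcases Nat.lt_or_ge i j with h | h
  · rw [norm_sub_rev]; exact main j i hj hi (le_of_lt h)
  · exact main i j hi hj h

def eN (b e k : ℕ) : ℕ := if k + e < b then k + e else k + e - b

lemma unit_pp (hb : 3 ≤ b) {e : ℕ} (he : b = 2*e+1) {k : ℕ} (hk : k < b) :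
    ‖pP b k - pP b (eN b e k)‖ = 1 := by
  apply norm_eq_one_of
  rw [eN]
  split_ifs with hcase
  · rw [norm_sub_rev, dist_pp' b (by omega : k ≤ k + e)]
    have h1 := key_eq hb (k + e - k) (by left; omega)
    have h2 := r_id hb
    nlinarith
  · rw [dist_pp' b (by omega : k + e - b ≤ k)]
    have h1 := key_eq hb (k - (k + e - b)) (by right; omega)
    have h2 := r_id hb
    nlinarith

lemma unit_qq (hb : 3 ≤ b) (hc : 2 ≤ c) :
    ‖pQ b c (c-1) - pQ b c 0‖ = 1 := by
  apply norm_eq_one_of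
  rw [dist_qq' b c (by omega : 0 ≤ c - 1)]
  have h3 : ((c-1:ℕ):ℝ) = (c:ℝ) - 1 := by
    have h4 : 1 ≤ c := by omega
    push_cast [Nat.cast_sub h4]; ring
  rw [show (c - 1 - 0 : ℕ) = (c-1 : ℕ) by omega, h3]
  rw [show ((c:ℝ)-1) * sB b / ((c:ℝ)-1) = sB b by
    have := cm1 (c := c) hc; field_simp]
  exact r_id2 hb

lemma tri_mem (X : Finset (EuclideanSpace ℝ (Fin 4))) {u v w : EuclideanSpace ℝ (Fin 4)}
    (hu : u ∈ X) (hv : v ∈ X) (hw : w ∈ X)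
    (huv : u ≠ v) (huw : u ≠ w) (hvw : v ≠ w)
    (d1 : ‖u - v‖ = 1) (d2 : ‖u - w‖ = 1) (d3 : ‖v - w‖ = 1) :
    ({u, v, w} : Finset _) ∈ unitTriangles X := by
  rw [unitTriangles, Finset.mem_filter, Finset.mem_powersetCard]
  refine ⟨⟨?_, ?_⟩, ?_⟩
  · intro x hx
    rcases Finset.mem_insert.mp hx with rfl | hx
    · exact hu
    rcases Finset.mem_insert.mp hx with rfl | hx
    · exact hv
    rw [Finset.mem_singleton] at hx
    exact hx ▸ hw
  · rw [Finset.card_insert_of_notMem (by simp [huv, huw]),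
      Finset.card_insert_of_notMem (by simp [hvw]), Finset.card_singleton]
  · intro x hx y hy hxy
    simp only [Finset.mem_insert, Finset.mem_singleton] at hx hy
    rcases hx with rfl | rfl | rfl <;> rcases hy with rfl | rfl | rfl <;>
      first
        | exact absurd rfl hxy
        | assumption
        | (rw [norm_sub_rev]; assumption)

end
end LenzAux

namespace LenzAux
open Real Finset

lemma eN_lt {b e : ℕ} (he : b = 2*e+1) (he1 : 1 ≤ e) {k : ℕ} (hk : k < b) :
    eN b e k < b := by
  rw [eN]; split_ifs <;> omega

lemma eN_ne {b e : ℕ} (he : b = 2*e+1) (he1 : 1 ≤ e) {k : ℕ} (hk : k < b) :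
    eN b e k ≠ k := by
  rw [eN]; split_ifs <;> omega

lemma main_count (b c : ℕ) (hb : 3 ≤ b) (hbo : b % 2 = 1) (hc : 2 ≤ c) :
    ∃ X : Finset (EuclideanSpace ℝ (Fin 4)), X.card = b + c ∧
      (∀ x ∈ X, ∀ y ∈ X, ‖x - y‖ ≤ 1) ∧
      (unitTriangles X).card ≥ b * c + b := by
  obtain ⟨e, he⟩ : ∃ e, b = 2*e+1 := ⟨b/2, by omega⟩
  have he1 : 1 ≤ e := by omega
  set X : Finset (EuclideanSpace ℝ (Fin 4)) :=
    (Finset.range b).image (pP b) ∪ (Finset.range c).image (pQ b c) with hX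
  have hPmem : ∀ k, k < b → pP b k ∈ X := fun k hk =>
    Finset.mem_union_left _ (Finset.mem_image_of_mem _ (Finset.mem_range.2 hk))
  have hQmem : ∀ j, j < c → pQ b c j ∈ X := fun j hj =>
    Finset.mem_union_right _ (Finset.mem_image_of_mem _ (Finset.mem_range.2 hj))
  have hinjP : Set.InjOn (pP b) (Finset.range b : Finset ℕ) := by
    intro k hk l hl heq
    by_contra hne
    exact pP_ne hb (Finset.mem_range.1 (Finset.mem_coe.1 hk))
      (Finset.mem_range.1 (Finset.mem_coe.1 hl)) hne heq
  have hinjQ : Set.InjOn (pQ b c) (Finset.range c : Finset ℕ) := by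
    intro k hk l hl heq
    by_contra hne
    exact pQ_ne hb hc (Finset.mem_range.1 (Finset.mem_coe.1 hk))
      (Finset.mem_range.1 (Finset.mem_coe.1 hl)) hne heq
  have hdisj : Disjoint ((Finset.range b).image (pP b)) ((Finset.range c).image (pQ b c)) := by
    rw [Finset.disjoint_left]
    rintro t ht ht'
    obtain ⟨k, hk, rfl⟩ := Finset.mem_image.1 ht
    obtain ⟨j, hj, hQ⟩ := Finset.mem_image.1 ht'
    exact pP_ne_pQ hb hc (Finset.mem_range.1 hj) hQ.symm
  have hcard : X.card = b + c := by
    rw [hX, Finset.card_union_of_disjoint hdisj, Finset.card_image_of_injOn hinjP,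
      Finset.card_image_of_injOn hinjQ, Finset.card_range, Finset.card_range]
  have hdiam : ∀ x ∈ X, ∀ y ∈ X, ‖x - y‖ ≤ 1 := by
    intro x hx y hy
    rw [hX, Finset.mem_union] at hx hy
    rcases hx with hx | hx <;> rcases hy with hy | hy
    · obtain ⟨k, hk, rfl⟩ := Finset.mem_image.1 hx
      obtain ⟨l, hl, rfl⟩ := Finset.mem_image.1 hy
      exact diam_pp hb hbo (Finset.mem_range.1 hk) (Finset.mem_range.1 hl)
    · obtain ⟨k, hk, rfl⟩ := Finset.mem_image.1 hx
      obtain ⟨j, hj, rfl⟩ := Finset.mem_image.1 hy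
      exact le_of_eq (unit_pq hb k j)
    · obtain ⟨j, hj, rfl⟩ := Finset.mem_image.1 hx
      obtain ⟨k, hk, rfl⟩ := Finset.mem_image.1 hy
      exact le_of_eq (unit_qp hb k j)
    · obtain ⟨i, hi, rfl⟩ := Finset.mem_image.1 hx
      obtain ⟨j, hj, rfl⟩ := Finset.mem_image.1 hy
      exact diam_qq hb hc (Finset.mem_range.1 hi) (Finset.mem_range.1 hj)
  refine ⟨X, hcard, hdiam, ?_⟩
  -- triangle counting
  classical
  set F : ℕ × ℕ → Finset (EuclideanSpace ℝ (Fin 4)) :=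
    fun p => {pP b p.1, pP b (eN b e p.1), pQ b c p.2} with hF
  set G : ℕ → Finset (EuclideanSpace ℝ (Fin 4)) :=
    fun k => {pQ b c 0, pQ b c (c-1), pP b k} with hG
  set S1 := (Finset.range b ×ˢ Finset.range c).image F with hS1
  set S2 := (Finset.range b).image G with hS2
  have hS1sub : S1 ⊆ unitTriangles X := by
    intro t ht
    obtain ⟨⟨k, j⟩, hkj, rfl⟩ := Finset.mem_image.1 ht
    rw [Finset.mem_product, Finset.mem_range, Finset.mem_range] at hkj
    obtain ⟨hk, hj⟩ := hkj
    exact tri_mem X (hPmem k hk) (hPmem _ (eN_lt he he1 hk)) (hQmem j hj)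
      (pP_ne hb hk (eN_lt he he1 hk) (fun hkk => (eN_ne he he1 hk) hkk.symm))
      (pP_ne_pQ hb hc hj) (pP_ne_pQ hb hc hj)
      (unit_pp hb he hk) (unit_pq hb k j) (unit_pq hb _ j)
  have hS2sub : S2 ⊆ unitTriangles X := by
    intro t ht
    obtain ⟨k, hk, rfl⟩ := Finset.mem_image.1 ht
    rw [Finset.mem_range] at hk
    refine tri_mem X (hQmem 0 (by omega)) (hQmem (c-1) (by omega)) (hPmem k hk)
      (pQ_ne hb hc (by omega) (by omega) (by omega))
      (fun h => pP_ne_pQ hb hc (j := 0) (by omega) h.symm)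
      (fun h => pP_ne_pQ hb hc (j := c-1) (by omega) h.symm)
      ?_ (unit_qp hb k 0) (unit_qp hb k (c-1))
    rw [norm_sub_rev]; exact unit_qq hb hc
  have hinjF : Set.InjOn F ((Finset.range b ×ˢ Finset.range c) : Finset (ℕ × ℕ)) := by
    rintro ⟨k, j⟩ h1 ⟨l, i⟩ h2 hFe
    rw [Finset.mem_coe, Finset.mem_product, Finset.mem_range, Finset.mem_range] at h1 h2
    obtain ⟨hk, hj⟩ := h1
    obtain ⟨hl, hi⟩ := h2
    simp only [hF] at hFe
    have hQm : pQ b c j ∈ ({pP b l, pP b (eN b e l), pQ b c i} : Finset _) := by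
      rw [← hFe]; simp
    have hji : j = i := by
      simp only [Finset.mem_insert, Finset.mem_singleton] at hQm
      rcases hQm with h | h | h
      · exact absurd h.symm (pP_ne_pQ hb hc hj)
      · exact absurd h.symm (pP_ne_pQ hb hc hj)
      · by_contra hne
        exact pQ_ne hb hc hj hi hne h
    have hPm : pP b k ∈ ({pP b l, pP b (eN b e l), pQ b c i} : Finset _) := by
      rw [← hFe]; simp
    have hPm2 : pP b l ∈ ({pP b k, pP b (eN b e k), pQ b c j} : Finset _) := by
      rw [hFe]; simp
    have hkl : k = l := by
      simp only [Finset.mem_insert, Finset.mem_singleton] at hPm hPm2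
      rcases hPm with h | h | h
      · by_contra hne
        exact pP_ne hb hk hl hne h
      · rcases hPm2 with h' | h' | h'
        · by_contra hne
          exact pP_ne hb hl hk (fun x => hne x.symm) h'
        · have e1 : k = eN b e l := by
            by_contra hne
            exact pP_ne hb hk (eN_lt he he1 hl) hne h
          have e2 : l = eN b e k := by
            by_contra hne
            exact pP_ne hb hl (eN_lt he he1 hk) hne h'
          simp only [eN] at e1 e2
          split_ifs at e1 e2 <;> omega
        · exact absurd h' (pP_ne_pQ hb hc hj)
      · exact absurd h (pP_ne_pQ hb hc hi)
    exact Prod.ext hkl hji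
  have hinjG : Set.InjOn G ((Finset.range b) : Finset ℕ) := by
    intro k h1 l h2 hGe
    rw [Finset.mem_coe, Finset.mem_range] at h1 h2
    simp only [hG] at hGe
    have hPm : pP b k ∈ ({pQ b c 0, pQ b c (c-1), pP b l} : Finset _) := by
      rw [← hGe]; simp
    simp only [Finset.mem_insert, Finset.mem_singleton] at hPm
    rcases hPm with h | h | h
    · exact absurd h (pP_ne_pQ hb hc (by omega))
    · exact absurd h (pP_ne_pQ hb hc (by omega))
    · by_contra hne
      exact pP_ne hb h1 h2 hne h
  have hdisj2 : Disjoint S1 S2 := by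
    rw [Finset.disjoint_left]
    rintro t ht ht'
    obtain ⟨⟨k, j⟩, hkj, rfl⟩ := Finset.mem_image.1 ht
    obtain ⟨l, hl, hGl⟩ := Finset.mem_image.1 ht'
    rw [Finset.mem_product, Finset.mem_range, Finset.mem_range] at hkj
    obtain ⟨hk, hj⟩ := hkj
    change k < b at hk
    change j < c at hj
    rw [Finset.mem_range] at hl
    simp only [hF, hG] at hGl
    have hm1 : pP b k ∈ ({pQ b c 0, pQ b c (c-1), pP b l} : Finset _) := by
      rw [hGl]; simp
    have hm2 : pP b (eN b e k) ∈ ({pQ b c 0, pQ b c (c-1), pP b l} : Finset _) := by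
      rw [hGl]; simp
    simp only [Finset.mem_insert, Finset.mem_singleton] at hm1 hm2
    have hkeq : k = l := by
      rcases hm1 with h | h | h
      · exact absurd h (pP_ne_pQ hb hc (by omega))
      · exact absurd h (pP_ne_pQ hb hc (by omega))
      · by_contra hne; exact pP_ne hb hk hl hne h
    have hkeq2 : eN b e k = l := by
      rcases hm2 with h | h | h
      · exact absurd h (pP_ne_pQ hb hc (by omega))
      · exact absurd h (pP_ne_pQ hb hc (by omega))
      · by_contra hne; exact pP_ne hb (eN_lt he he1 hk) hl hne h
    exact (eN_ne he he1 hk) (by omega)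
  have hsub : S1 ∪ S2 ⊆ unitTriangles X := Finset.union_subset hS1sub hS2sub
  have hcount : (S1 ∪ S2).card = b * c + b := by
    rw [Finset.card_union_of_disjoint hdisj2, hS1, hS2,
      Finset.card_image_of_injOn hinjF, Finset.card_image_of_injOn hinjG,
      Finset.card_product, Finset.card_range, Finset.card_range]
  calc b * c + b = (S1 ∪ S2).card := hcount.symm
    _ ≤ (unitTriangles X).card := Finset.card_le_card hsub

end LenzAux

theorem lenz_configuration_many_triangles (n a : ℕ) (hn : n ≥ 5)
    (ha₂ : 2 ≤ a) (han : a ≤ n - 2) :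
    ∃ X : Finset (EuclideanSpace ℝ (Fin 4)), X.card = n ∧
      (∀ x ∈ X, ∀ y ∈ X, ‖x - y‖ ≤ 1) ∧
      (unitTriangles X).card ≥ n + 2 * (n - a) * ((a - 1) / 2) := by
  set d := (a - 1) / 2 with hd
  set b := if a = 2 then 3 else 2 * d + 1 with hbdef
  have hb3 : 3 ≤ b := by
    rw [hbdef]; split_ifs with h
    · omega
    · omega
  have hbo : b % 2 = 1 := by
    rw [hbdef]; split_ifs <;> omega
  have hba : b ≤ n - 2 := by
    rw [hbdef]; split_ifs with h
    · omega
    · omega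
  set c := n - b with hcdef
  have hc2 : 2 ≤ c := by omega
  have hbc : b + c = n := by omega
  obtain ⟨X, hcard, hdiam, hcount⟩ := LenzAux.main_count b c hb3 hbo hc2
  refine ⟨X, by rw [hcard, hbc], hdiam, ?_⟩
  have harith : n + 2 * (n - a) * d ≤ b * c + b := by
    by_cases h : a = 2
    · subst h
      have hb3' : b = 3 := by simp [hbdef]
      have hd0 : d = 0 := by omega
      rw [hd0, Nat.mul_zero, Nat.add_zero, hb3']
      omega
    · have hbval : b = 2 * d + 1 := by rw [hbdef, if_neg h]
      have hda : 2 * d + 1 ≤ a := by omega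
      have h1 : n - a ≤ c := by omega
      have h2 : 2 * (n - a) * d ≤ 2 * c * d :=
        Nat.mul_le_mul_right d (Nat.mul_le_mul_left 2 h1)
      have h3 : b * c + b = n + 2 * c * d := by
        rw [hbval, ← hbc, hbval]; ring
      linarith
  linarith
end

section
/- For every natural number n ≥ 1 there exists a set X of 2n points in Euclidean 4-space, each of norm 1/√2, with all pairwise distances at most 1, such that the number of unordered pairs {x, y} ⊆ X with ‖x − y‖ = 1 is at least n². (Consequently, the bound of 2·|X| − 2 edges for diameter graphs on the sphere of radius r > 1/√2 fails at radius r = 1/√2.) -/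
attribute [local instance] Classical.propDecidable

/-- The set of unordered pairs of points of `X` at distance exactly `1`. -/
noncomputable def unitPairs (X : Finset (EuclideanSpace ℝ (Fin 4))) :
    Finset (Finset (EuclideanSpace ℝ (Fin 4))) :=
  (X.powersetCard 2).filter (fun s => ∀ x ∈ s, ∀ y ∈ s, x ≠ y → ‖x - y‖ = 1)

namespace ManyEdgesAux

noncomputable def pt (a b c d : ℝ) : EuclideanSpace ℝ (Fin 4) :=
  (WithLp.equiv 2 (Fin 4 → ℝ)).symm ![a, b, c, d]

lemma pt_zero (a b c d : ℝ) : pt a b c d 0 = a := rfl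
lemma pt_one (a b c d : ℝ) : pt a b c d 1 = b := rfl
lemma pt_two (a b c d : ℝ) : pt a b c d 2 = c := rfl
lemma pt_three (a b c d : ℝ) : pt a b c d 3 = d := rfl

lemma pt_sub (a b c d a' b' c' d' : ℝ) :
    pt a b c d - pt a' b' c' d' = pt (a-a') (b-b') (c-c') (d-d') := by
  ext i; fin_cases i <;> rfl

lemma norm_pt (a b c d : ℝ) : ‖pt a b c d‖ = Real.sqrt (a^2+b^2+c^2+d^2) := by
  rw [EuclideanSpace.norm_eq]
  simp [Fin.sum_univ_four, pt_zero, pt_one, pt_two, pt_three, Real.norm_eq_abs, sq_abs]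

noncomputable def th (n i : ℕ) : ℝ := i * (Real.pi / (2 * n))

noncomputable def A (n i : ℕ) : EuclideanSpace ℝ (Fin 4) :=
  pt (Real.cos (th n i) / Real.sqrt 2) (Real.sin (th n i) / Real.sqrt 2) 0 0

noncomputable def B (n i : ℕ) : EuclideanSpace ℝ (Fin 4) :=
  pt 0 0 (Real.cos (th n i) / Real.sqrt 2) (Real.sin (th n i) / Real.sqrt 2)

lemma th_nonneg (n i : ℕ) : 0 ≤ th n i := by
  unfold th
  positivity

lemma th_lt (n : ℕ) (hn : 1 ≤ n) {i : ℕ} (hi : i < n) : th n i < Real.pi / 2 := by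
  unfold th
  have h2n : (0:ℝ) < 2 * n := by positivity
  have : (i:ℝ) * (Real.pi / (2*n)) < n * (Real.pi / (2*n)) := by
    apply mul_lt_mul_of_pos_right (by exact_mod_cast hi)
    positivity
  calc (i:ℝ) * (Real.pi / (2*n)) < n * (Real.pi / (2*n)) := this
    _ = Real.pi / 2 := by field_simp

lemma th_inj (n : ℕ) (hn : 1 ≤ n) {i j : ℕ} (h : th n i = th n j) : i = j := by
  have hp : (0:ℝ) < Real.pi / (2*n) := by
    have : (0:ℝ) < (n:ℝ) := by exact_mod_cast hn
    positivity
  have := mul_right_cancel₀ (ne_of_gt hp) h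
  exact_mod_cast this

lemma norm_A (n i : ℕ) : ‖A n i‖ = 1 / Real.sqrt 2 := by
  rw [A, norm_pt]
  have h := Real.sin_sq_add_cos_sq (th n i)
  have h2 : Real.sqrt 2 ^ 2 = 2 := Real.sq_sqrt (by norm_num)
  have : (Real.cos (th n i) / Real.sqrt 2)^2 + (Real.sin (th n i) / Real.sqrt 2)^2 + 0^2 + 0^2 = 1/2 := by
    field_simp
    nlinarith [h, h2]
  rw [this]
  rw [show (1:ℝ)/2 = 2⁻¹ by norm_num, Real.sqrt_inv, one_div]

lemma norm_B (n i : ℕ) : ‖B n i‖ = 1 / Real.sqrt 2 := by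
  rw [B, norm_pt]
  have h := Real.sin_sq_add_cos_sq (th n i)
  have : (0:ℝ)^2 + 0^2 + (Real.cos (th n i) / Real.sqrt 2)^2 + (Real.sin (th n i) / Real.sqrt 2)^2 = 1/2 := by
    field_simp
    nlinarith [h, Real.sq_sqrt (show (0:ℝ) ≤ 2 by norm_num)]
  rw [this]
  rw [show (1:ℝ)/2 = 2⁻¹ by norm_num, Real.sqrt_inv, one_div]

lemma dist_AB (n i j : ℕ) : ‖A n i - B n j‖ = 1 := by
  rw [A, B, pt_sub, norm_pt]
  have h1 := Real.sin_sq_add_cos_sq (th n i)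
  have h2 := Real.sin_sq_add_cos_sq (th n j)
  have hs : Real.sqrt 2 ^ 2 = 2 := Real.sq_sqrt (by norm_num)
  have : (Real.cos (th n i) / Real.sqrt 2 - 0)^2 + (Real.sin (th n i) / Real.sqrt 2 - 0)^2
      + (0 - Real.cos (th n j) / Real.sqrt 2)^2 + (0 - Real.sin (th n j) / Real.sqrt 2)^2 = 1 := by
    have hne : Real.sqrt 2 ≠ 0 := by positivity
    field_simp
    nlinarith [h1, h2]
  rw [this, Real.sqrt_one]

lemma dist_AA (n : ℕ) (hn : 1 ≤ n) {i j : ℕ} (hi : i < n) (hj : j < n) :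
    ‖A n i - A n j‖ ≤ 1 := by
  simp only [A]
  rw [pt_sub, norm_pt]
  have hcos : 0 ≤ Real.cos (th n i - th n j) := by
    apply Real.cos_nonneg_of_mem_Icc
    constructor
    · have := th_lt n hn hj
      have := th_nonneg n i
      linarith
    · have := th_lt n hn hi
      have := th_nonneg n j
      linarith
  rw [Real.cos_sub] at hcos
  have h1 := Real.sin_sq_add_cos_sq (th n i)
  have h2 := Real.sin_sq_add_cos_sq (th n j)
  have harg : (Real.cos (th n i) / Real.sqrt 2 - Real.cos (th n j) / Real.sqrt 2)^2
      + (Real.sin (th n i) / Real.sqrt 2 - Real.sin (th n j) / Real.sqrt 2)^2 + (0-0)^2 + (0-0)^2 ≤ 1 := by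
    have hs : Real.sqrt 2 ^ 2 = 2 := Real.sq_sqrt (by norm_num)
    have hne : Real.sqrt 2 ≠ 0 := by positivity
    have e : (Real.cos (th n i) / Real.sqrt 2 - Real.cos (th n j) / Real.sqrt 2)^2
      + (Real.sin (th n i) / Real.sqrt 2 - Real.sin (th n j) / Real.sqrt 2)^2 + (0-0:ℝ)^2 + (0-0)^2
      = 1 - (Real.cos (th n i) * Real.cos (th n j) + Real.sin (th n i) * Real.sin (th n j)) := by
      field_simp
      nlinarith [h1, h2]
    rw [e]
    linarith
  calc Real.sqrt _ ≤ Real.sqrt 1 := Real.sqrt_le_sqrt harg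
    _ = 1 := Real.sqrt_one

lemma dist_BB (n : ℕ) (hn : 1 ≤ n) {i j : ℕ} (hi : i < n) (hj : j < n) :
    ‖B n i - B n j‖ ≤ 1 := by
  simp only [B]
  rw [pt_sub, norm_pt]
  have hcos : 0 ≤ Real.cos (th n i - th n j) := by
    apply Real.cos_nonneg_of_mem_Icc
    constructor
    · have := th_lt n hn hj
      have := th_nonneg n i
      linarith
    · have := th_lt n hn hi
      have := th_nonneg n j
      linarith
  rw [Real.cos_sub] at hcos
  have h1 := Real.sin_sq_add_cos_sq (th n i)
  have h2 := Real.sin_sq_add_cos_sq (th n j)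
  have harg : (0-0:ℝ)^2 + (0-0)^2 + (Real.cos (th n i) / Real.sqrt 2 - Real.cos (th n j) / Real.sqrt 2)^2
      + (Real.sin (th n i) / Real.sqrt 2 - Real.sin (th n j) / Real.sqrt 2)^2 ≤ 1 := by
    have hs : Real.sqrt 2 ^ 2 = 2 := Real.sq_sqrt (by norm_num)
    have hne : Real.sqrt 2 ≠ 0 := by positivity
    have e : (0-0:ℝ)^2 + (0-0)^2 + (Real.cos (th n i) / Real.sqrt 2 - Real.cos (th n j) / Real.sqrt 2)^2
      + (Real.sin (th n i) / Real.sqrt 2 - Real.sin (th n j) / Real.sqrt 2)^2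
      = 1 - (Real.cos (th n i) * Real.cos (th n j) + Real.sin (th n i) * Real.sin (th n j)) := by
      field_simp
      nlinarith [h1, h2]
    rw [e]
    linarith
  calc Real.sqrt _ ≤ Real.sqrt 1 := Real.sqrt_le_sqrt harg
    _ = 1 := Real.sqrt_one

lemma A_ne_B (n i j : ℕ) (hn : 1 ≤ n) (hi : i < n) : A n i ≠ B n j := by
  intro h
  have h0 : A n i 0 = B n j 0 := by rw [h]
  rw [A, B, pt_zero, pt_zero] at h0
  have hcpos : 0 < Real.cos (th n i) :=
    Real.cos_pos_of_mem_Ioo ⟨by linarith [th_nonneg n i, Real.pi_pos], th_lt n hn hi⟩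
  have hs : 0 < Real.sqrt 2 := by positivity
  have : Real.cos (th n i) / Real.sqrt 2 > 0 := by positivity
  linarith [this, h0.le, h0.ge]

lemma A_inj (n : ℕ) (hn : 1 ≤ n) {i j : ℕ} (hi : i < n) (hj : j < n)
    (h : A n i = A n j) : i = j := by
  have h0 : A n i 0 = A n j 0 := by rw [h]
  rw [A, A, pt_zero, pt_zero] at h0
  have hs : Real.sqrt 2 ≠ 0 := by positivity
  have hc : Real.cos (th n i) = Real.cos (th n j) := by
    field_simp at h0; exact h0
  have := Real.injOn_cos
    ⟨th_nonneg n i, le_of_lt (lt_of_lt_of_le (th_lt n hn hi) (by linarith [Real.pi_pos]))⟩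
    ⟨th_nonneg n j, le_of_lt (lt_of_lt_of_le (th_lt n hn hj) (by linarith [Real.pi_pos]))⟩ hc
  exact th_inj n hn this

lemma B_inj (n : ℕ) (hn : 1 ≤ n) {i j : ℕ} (hi : i < n) (hj : j < n)
    (h : B n i = B n j) : i = j := by
  have h0 : B n i 2 = B n j 2 := by rw [h]
  rw [B, B, pt_two, pt_two] at h0
  have hs : Real.sqrt 2 ≠ 0 := by positivity
  have hc : Real.cos (th n i) = Real.cos (th n j) := by
    field_simp at h0; exact h0
  have := Real.injOn_cos
    ⟨th_nonneg n i, le_of_lt (lt_of_lt_of_le (th_lt n hn hi) (by linarith [Real.pi_pos]))⟩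
    ⟨th_nonneg n j, le_of_lt (lt_of_lt_of_le (th_lt n hn hj) (by linarith [Real.pi_pos]))⟩ hc
  exact th_inj n hn this

end ManyEdgesAux

open ManyEdgesAux in
theorem many_edges_on_sphere_of_critical_radius (n : ℕ) (hn : n ≥ 1) :
    ∃ X : Finset (EuclideanSpace ℝ (Fin 4)), X.card = 2 * n ∧
      (∀ x ∈ X, ‖x‖ = 1 / Real.sqrt 2) ∧
      (∀ x ∈ X, ∀ y ∈ X, ‖x - y‖ ≤ 1) ∧
      (unitPairs X).card ≥ n ^ 2 := by
  classical
  set SA : Finset (EuclideanSpace ℝ (Fin 4)) := (Finset.range n).image (A n) with hSA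
  set SB : Finset (EuclideanSpace ℝ (Fin 4)) := (Finset.range n).image (B n) with hSB
  have hdisj : Disjoint SA SB := by
    rw [Finset.disjoint_left]
    intro x hx hx'
    simp only [hSA, hSB, Finset.mem_image, Finset.mem_range] at hx hx'
    obtain ⟨i, hi, rfl⟩ := hx
    obtain ⟨j, hj, hBj⟩ := hx'
    exact A_ne_B n i j hn hi hBj.symm
  refine ⟨SA ∪ SB, ?_, ?_, ?_, ?_⟩
  · rw [Finset.card_union_of_disjoint hdisj]
    have cA : SA.card = n := by
      rw [hSA, Finset.card_image_of_injOn, Finset.card_range]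
      intro i hi j hj h
      exact A_inj n hn (Finset.mem_range.mp hi) (Finset.mem_range.mp hj) h
    have cB : SB.card = n := by
      rw [hSB, Finset.card_image_of_injOn, Finset.card_range]
      intro i hi j hj h
      exact B_inj n hn (Finset.mem_range.mp hi) (Finset.mem_range.mp hj) h
    rw [cA, cB]; ring
  · intro x hx
    rcases Finset.mem_union.mp hx with h | h <;>
      simp only [hSA, hSB, Finset.mem_image, Finset.mem_range] at h <;>
      obtain ⟨i, hi, rfl⟩ := h
    · exact norm_A n i
    · exact norm_B n i
  · intro x hx y hy
    rcases Finset.mem_union.mp hx with h | h <;>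
      rcases Finset.mem_union.mp hy with h' | h' <;>
      simp only [hSA, hSB, Finset.mem_image, Finset.mem_range] at h h' <;>
      obtain ⟨i, hi, rfl⟩ := h <;> obtain ⟨j, hj, rfl⟩ := h'
    · exact dist_AA n hn hi hj
    · exact le_of_eq (dist_AB n i j)
    · rw [show B n i - A n j = -(A n j - B n i) by abel, norm_neg]
      exact le_of_eq (dist_AB n j i)
    · exact dist_BB n hn hi hj
  · -- count
    have hmap : ((Finset.range n) ×ˢ (Finset.range n)).image
        (fun p : ℕ × ℕ => ({A n p.1, B n p.2} : Finset (EuclideanSpace ℝ (Fin 4))))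
        ⊆ unitPairs (SA ∪ SB) := by
      intro s hs
      simp only [Finset.mem_image, Finset.mem_product, Finset.mem_range] at hs
      obtain ⟨⟨i, j⟩, ⟨hi, hj⟩, rfl⟩ := hs
      rw [unitPairs, Finset.mem_filter, Finset.mem_powersetCard]
      refine ⟨⟨?_, ?_⟩, ?_⟩
      · intro x hx
        rcases Finset.mem_insert.mp hx with rfl | hx
        · exact Finset.mem_union_left _ (Finset.mem_image.mpr ⟨i, Finset.mem_range.mpr hi, rfl⟩)
        · rw [Finset.mem_singleton.mp hx]
          exact Finset.mem_union_right _ (Finset.mem_image.mpr ⟨j, Finset.mem_range.mpr hj, rfl⟩)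
      · rw [Finset.card_insert_of_notMem (by simp [A_ne_B n i j hn hi]), Finset.card_singleton]
      · intro x hx y hy hxy
        simp only [Finset.mem_insert, Finset.mem_singleton] at hx hy
        rcases hx with rfl | rfl <;> rcases hy with rfl | rfl
        · exact absurd rfl hxy
        · exact dist_AB n i j
        · rw [show B n j - A n i = -(A n i - B n j) by abel, norm_neg]
          exact dist_AB n i j
        · exact absurd rfl hxy
    have hinj : Set.InjOn (fun p : ℕ × ℕ => ({A n p.1, B n p.2} : Finset (EuclideanSpace ℝ (Fin 4))))
        (((Finset.range n) ×ˢ (Finset.range n) : Finset (ℕ × ℕ)) : Set (ℕ × ℕ)) := by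
      rintro ⟨i, j⟩ hij ⟨i', j'⟩ hij' h
      simp only [Finset.mem_coe, Finset.mem_product, Finset.mem_range] at hij hij'
      simp only at h
      have hAi : A n i ∈ ({A n i', B n j'} : Finset _) := by
        rw [← h]; exact Finset.mem_insert_self _ _
      have hBj : B n j ∈ ({A n i', B n j'} : Finset _) := by
        rw [← h]; exact Finset.mem_insert.mpr (Or.inr (Finset.mem_singleton_self _))
      have hA : A n i = A n i' := by
        rcases Finset.mem_insert.mp hAi with h1 | h1
        · exact h1
        · exact absurd (Finset.mem_singleton.mp h1) (A_ne_B n i j' hn hij.1)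
      have hB : B n j = B n j' := by
        rcases Finset.mem_insert.mp hBj with h1 | h1
        · exact absurd h1.symm (A_ne_B n i' j hn hij'.1)
        · exact Finset.mem_singleton.mp h1
      exact Prod.ext (A_inj n hn hij.1 hij'.1 hA) (B_inj n hn hij.2 hij'.2 hB)
    calc (n:ℕ)^2 = ((Finset.range n) ×ˢ (Finset.range n)).card := by
          rw [Finset.card_product, Finset.card_range]; ring
      _ = (((Finset.range n) ×ˢ (Finset.range n)).image
            (fun p : ℕ × ℕ => ({A n p.1, B n p.2} : Finset (EuclideanSpace ℝ (Fin 4))))).card := by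
          rw [Finset.card_image_of_injOn hinj]
      _ ≤ (unitPairs (SA ∪ SB)).card := Finset.card_le_card hmap
end
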